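/- arXiv:1702.06121 — 3 statements merged into one kernel-verified Lean document; each statement's English description precedes it below -/
import Mathlib

section
/- Let k ≥ 2, ν ≥ k, m, n ∈ kℕ, r_1,…,r_n, c_1,…,c_m ∈ ℕ₀, and v(i,j) ∈ {0, ν} for (i,j) ∈ C(m,n,k). If there exists a real matrix x with entries x_{p,q} ∈ [0,1], (p,q) ∈ [m]×[n], satisfying Σ_{p∈[m]} x_{p,q} = r_q for all q ∈ [n], Σ_{q∈[n]} x_{p,q} = c_p for all p ∈ [m], and Σ_{(p,q)∈W(i,j+l)} x_{p,q} ≤ min{1, v(i,j)} for all (i,j) ∈ C(m,n,k) and l ∈ [k−1]₀, where W(i,j+l) := B_k(i,j) ∩ ([m]×{j+l}), then there exists a matrix with all entries in {0,1} satisfying the same constraints. -/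
open scoped Classical

/-- The grid `[m] × [n] = {1,…,m} × {1,…,n}`. -/
def gridIcc (m n : ℕ) : Finset (ℕ × ℕ) := Finset.Icc 1 m ×ˢ Finset.Icc 1 n

/-- The corner points `C(m,n,k) = ([m] × [n]) ∩ (kℕ₀+1)²`. -/
def cornerPts (m n k : ℕ) : Finset (ℕ × ℕ) :=
  (gridIcc m n).filter fun p => p.1 % k = 1 % k ∧ p.2 % k = 1 % k

/-- The block `B_k(i,j) = {(i+a, j+b) : a, b ∈ [k-1]₀}`. -/
def blockF (k i j : ℕ) : Finset (ℕ × ℕ) :=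
  Finset.Icc i (i + k - 1) ×ˢ Finset.Icc j (j + k - 1)

/-- The box `W(i, j+l) = B_k(i,j) ∩ ([m] × {j+l})`. -/
def boxW (m k i j l : ℕ) : Finset (ℕ × ℕ) :=
  (blockF k i j).filter fun z => z.1 ∈ Finset.Icc 1 m ∧ z.2 = j + l
open Finset

/-- Corner (start) of the block containing `p`. -/
def st13cnr (k p : ℕ) : ℕ := k * ((p-1)/k) + 1

lemma st13cnr_le {k p : ℕ} (hk : 0 < k) (hp : 1 ≤ p) : st13cnr k p ≤ p := by
  have h1 := Nat.div_mul_le_self (p-1) k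
  have := Nat.div_add_mod (p-1) k
  unfold st13cnr; omega

lemma st13le_cnr {k p : ℕ} (hk : 0 < k) (hp : 1 ≤ p) : p ≤ st13cnr k p + k - 1 := by
  have := Nat.div_add_mod (p-1) k
  have h2 : (p-1) % k < k := Nat.mod_lt _ hk
  unfold st13cnr; omega

lemma st13cnr_mod {k p : ℕ} : st13cnr k p % k = 1 % k := by
  unfold st13cnr; exact Nat.mul_add_mod k _ 1

lemma st13cnr_eq {k i p : ℕ} (hk : 2 ≤ k) (hi : i % k = 1 % k)
    (h1 : 1 ≤ i) (h2 : i ≤ p) (h3 : p ≤ i + k - 1) : st13cnr k p = i := by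
  have hk1 : 1 % k = 1 := Nat.mod_eq_of_lt (by omega)
  have hik : i % k = 1 := by omega
  have hid := Nat.div_add_mod i k
  -- i = k*(i/k) + 1
  have hi' : i = k * (i/k) + 1 := by omega
  have hdiv : (p-1)/k = i/k := by
    have lo : (i/k) * k ≤ p - 1 := by
      have : (i/k) * k = k * (i/k) := Nat.mul_comm _ _
      omega
    have hi2 : p - 1 < (i/k + 1) * k := by
      have : (i/k+1) * k = k * (i/k) + k := by ring
      omega
    exact Nat.div_eq_of_lt_le lo hi2
  unfold st13cnr; rw [hdiv]; omega

lemma st13block_le {k i m : ℕ} (hk : 2 ≤ k) (hm : k ∣ m)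
    (hi1 : 1 ≤ i) (him : i ≤ m) (himod : i % k = 1 % k) : i + k - 1 ≤ m := by
  obtain ⟨s, rfl⟩ := hm
  have hk1 : 1 % k = 1 := Nat.mod_eq_of_lt (by omega)
  have hid := Nat.div_add_mod i k
  have hi' : i = k * (i/k) + 1 := by omega
  have hlt : i/k < s := by
    by_contra h
    push_neg at h
    have : k * s ≤ k * (i/k) := Nat.mul_le_mul_left k h
    omega
  have : k * (i/k + 1) ≤ k * s := Nat.mul_le_mul_left k hlt
  have : k * (i/k) + k ≤ k * s := by rw [Nat.mul_add] at this; omega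
  omega

/-- row corners -/
def st13I (m k : ℕ) : Finset ℕ := (Finset.Icc 1 m).filter (fun i => i % k = 1 % k)

lemma st13mem_I {m k p : ℕ} (hk : 2 ≤ k) (hp : p ∈ Finset.Icc 1 m) :
    st13cnr k p ∈ st13I m k := by
  simp only [st13I, mem_filter, mem_Icc] at *
  have h1 := st13cnr_le (k := k) (p := p) (by omega) hp.1
  exact ⟨⟨by unfold st13cnr; omega, by omega⟩, st13cnr_mod⟩

lemma st13mem_block {k p : ℕ} (hk : 2 ≤ k) (hp : 1 ≤ p) :
    p ∈ Finset.Icc (st13cnr k p) (st13cnr k p + k - 1) := by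
  rw [mem_Icc]
  exact ⟨st13cnr_le (by omega) hp, st13le_cnr (by omega) hp⟩

lemma st13block_mem_iff {k i p : ℕ} (hk : 2 ≤ k) (hi1 : 1 ≤ i) (himod : i % k = 1 % k)
    (hp : 1 ≤ p) : p ∈ Finset.Icc i (i + k - 1) ↔ st13cnr k p = i := by
  rw [mem_Icc]
  constructor
  · rintro ⟨h1, h2⟩; exact st13cnr_eq hk himod hi1 h1 h2
  · rintro rfl; exact ⟨st13cnr_le (by omega) hp, st13le_cnr (by omega) hp⟩

/-- partition of `Icc 1 m` into blocks -/
lemma st13sum_blocks {M : Type*} [AddCommMonoid M] {m k : ℕ} (hk : 2 ≤ k) (hm : k ∣ m)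
    (g : ℕ → M) :
    ∑ p ∈ Finset.Icc 1 m, g p = ∑ i ∈ st13I m k, ∑ p ∈ Finset.Icc i (i+k-1), g p := by
  rw [← Finset.sum_biUnion]
  · congr 1
    ext p
    simp only [mem_biUnion, st13I, mem_filter, mem_Icc]
    constructor
    · intro hp
      refine ⟨st13cnr k p, ?_, ?_⟩
      · have := st13mem_I (m := m) hk (by rw [mem_Icc]; exact hp)
        simp only [st13I, mem_filter, mem_Icc] at this; exact this
      · have := st13mem_block (k := k) hk hp.1
        rw [mem_Icc] at this; exact this
    · rintro ⟨i, ⟨⟨hi1, him⟩, himod⟩, hpi⟩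
      have := st13block_le hk hm hi1 him himod
      exact ⟨by omega, by omega⟩
  · intro i hi j hj hij
    rw [Finset.mem_coe] at hi hj
    simp only [st13I, mem_filter, mem_Icc] at hi hj
    obtain ⟨⟨hi1, him⟩, himod⟩ := hi
    obtain ⟨⟨hj1, hjm⟩, hjmod⟩ := hj
    intro t hti htj z hz
    have hz1 := hti hz
    have hz2 := htj hz
    simp only [Finset.mem_coe, mem_Icc, Finset.le_eq_subset] at *
    exfalso
    have e1 := st13cnr_eq (p := z) hk himod hi1 hz1.1 hz1.2
    have e2 := st13cnr_eq (p := z) hk hjmod hj1 hz2.1 hz2.2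
    exact hij (e1 ▸ e2)
/-- Type of right-side vertices: copies of rows `inl (p,cc)`, column dummies `inr (inl (q,d))`,
and junk vertices `inr (inr w)`. -/
abbrev st13A : Type := (ℕ × ℕ) ⊕ ((ℕ × ℕ) ⊕ (ℕ × ℕ))

def st13cop (c : ℕ → ℕ) (B : Finset ℕ) : Finset st13A :=
  (B.sigma fun p => Finset.Icc 1 (c p)).image fun z => Sum.inl (z.1, z.2)

def st13dum (D : ℕ → ℕ) (B : Finset ℕ) : Finset st13A :=
  (B.sigma fun q => Finset.Icc 1 (D q)).image fun z => Sum.inr (Sum.inl (z.1, z.2))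

lemma st13mem_cop {c : ℕ → ℕ} {B : Finset ℕ} {a : st13A} :
    a ∈ st13cop c B ↔ ∃ p cc, a = Sum.inl (p, cc) ∧ p ∈ B ∧ cc ∈ Finset.Icc 1 (c p) := by
  simp only [st13cop, mem_image, mem_sigma]
  constructor
  · rintro ⟨⟨p, cc⟩, ⟨h1, h2⟩, rfl⟩; exact ⟨p, cc, rfl, h1, h2⟩
  · rintro ⟨p, cc, rfl, h1, h2⟩; exact ⟨⟨p, cc⟩, ⟨h1, h2⟩, rfl⟩

lemma st13mem_dum {D : ℕ → ℕ} {B : Finset ℕ} {a : st13A} :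
    a ∈ st13dum D B ↔ ∃ q d, a = Sum.inr (Sum.inl (q, d)) ∧ q ∈ B ∧ d ∈ Finset.Icc 1 (D q) := by
  simp only [st13dum, mem_image, mem_sigma]
  constructor
  · rintro ⟨⟨q, d⟩, ⟨h1, h2⟩, rfl⟩; exact ⟨q, d, rfl, h1, h2⟩
  · rintro ⟨q, d, rfl, h1, h2⟩; exact ⟨⟨q, d⟩, ⟨h1, h2⟩, rfl⟩

lemma st13cop_inj :
    Function.Injective (fun z : Σ _ : ℕ, ℕ => (Sum.inl (z.1, z.2) : st13A)) := by
  rintro ⟨p, cc⟩ ⟨p', cc'⟩ h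
  simp only [Sum.inl.injEq, Prod.mk.injEq] at h
  obtain ⟨rfl, rfl⟩ := h; rfl

lemma st13dum_inj :
    Function.Injective (fun z : Σ _ : ℕ, ℕ => (Sum.inr (Sum.inl (z.1, z.2)) : st13A)) := by
  rintro ⟨q, d⟩ ⟨q', d'⟩ h
  simp only [Sum.inr.injEq, Sum.inl.injEq, Prod.mk.injEq] at h
  obtain ⟨rfl, rfl⟩ := h; rfl

lemma st13sum_cop {c : ℕ → ℕ} {B : Finset ℕ} (g : st13A → ℝ) :
    ∑ a ∈ st13cop c B, g a = ∑ p ∈ B, ∑ cc ∈ Finset.Icc 1 (c p), g (Sum.inl (p, cc)) := by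
  rw [st13cop, Finset.sum_image (fun z _ z' _ h => st13cop_inj h), Finset.sum_sigma]

lemma st13sum_dum {D : ℕ → ℕ} {B : Finset ℕ} (g : st13A → ℝ) :
    ∑ a ∈ st13dum D B, g a
      = ∑ q ∈ B, ∑ d ∈ Finset.Icc 1 (D q), g (Sum.inr (Sum.inl (q, d))) := by
  rw [st13dum, Finset.sum_image (fun z _ z' _ h => st13dum_inj h), Finset.sum_sigma]

lemma st13card_cop {c : ℕ → ℕ} {B : Finset ℕ} : (st13cop c B).card = ∑ p ∈ B, c p := by
  rw [st13cop, Finset.card_image_of_injective _ st13cop_inj, Finset.card_sigma]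
  simp [Nat.card_Icc]

lemma st13card_dum {D : ℕ → ℕ} {B : Finset ℕ} : (st13dum D B).card = ∑ q ∈ B, D q := by
  rw [st13dum, Finset.card_image_of_injective _ st13dum_inj, Finset.card_sigma]
  simp [Nat.card_Icc]

lemma st13disj_cop_dum {c D : ℕ → ℕ} {B B' : Finset ℕ} :
    Disjoint (st13cop c B) (st13dum D B') := by
  rw [Finset.disjoint_left]
  intro a ha ha'
  rw [st13mem_cop] at ha; rw [st13mem_dum] at ha'
  obtain ⟨p, cc, rfl, -, -⟩ := ha
  obtain ⟨q, d, h, -, -⟩ := ha'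
  exact absurd h (by simp)

lemma st13cop_mono {c : ℕ → ℕ} {B B' : Finset ℕ} (h : B ⊆ B') : st13cop c B ⊆ st13cop c B' := by
  intro a ha; rw [st13mem_cop] at *
  obtain ⟨p, cc, rfl, h1, h2⟩ := ha; exact ⟨p, cc, rfl, h h1, h2⟩

lemma st13dum_mono {D : ℕ → ℕ} {B B' : Finset ℕ} (h : B ⊆ B') : st13dum D B ⊆ st13dum D B' := by
  intro a ha; rw [st13mem_dum] at *
  obtain ⟨q, d, rfl, h1, h2⟩ := ha; exact ⟨q, d, rfl, h h1, h2⟩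

/-- The left vertices: allowed (column, row-block-corner) pairs. -/
def st13L (m n k : ℕ) (v : ℕ × ℕ → ℕ) : Finset (ℕ × ℕ) :=
  ((Finset.Icc 1 n) ×ˢ st13I m k).filter fun w => v (w.2, st13cnr k w.1) ≠ 0

lemma st13mem_L {m n k : ℕ} {v : ℕ × ℕ → ℕ} {w : ℕ × ℕ} :
    w ∈ st13L m n k v ↔
      w.1 ∈ Finset.Icc 1 n ∧ w.2 ∈ st13I m k ∧ v (w.2, st13cnr k w.1) ≠ 0 := by
  simp only [st13L, mem_filter, Finset.mem_product]; tauto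

def st13Aq (m k : ℕ) (v : ℕ × ℕ → ℕ) (q : ℕ) : ℕ :=
  ((st13I m k).filter fun i => v (i, st13cnr k q) ≠ 0).card

def st13D (m k : ℕ) (v : ℕ × ℕ → ℕ) (r : ℕ → ℕ) (q : ℕ) : ℕ := st13Aq m k v q - r q

/-- The neighbourhoods of left vertices. -/
def st13N (k : ℕ) (c D : ℕ → ℕ) (w : ℕ × ℕ) : Finset st13A :=
  st13cop c (Finset.Icc w.2 (w.2 + k - 1)) ∪ st13dum D {w.1}

def st13t (m n k : ℕ) (v : ℕ × ℕ → ℕ) (c D : ℕ → ℕ) (w : ℕ × ℕ) : Finset st13A :=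
  if w ∈ st13L m n k v then st13N k c D w else {Sum.inr (Sum.inr w)}

/-- The fractional matching weights. -/
noncomputable def st13X (m k : ℕ) (c D : ℕ → ℕ) (x : ℕ × ℕ → ℝ) : ℕ × ℕ → st13A → ℝ :=
  fun w a =>
    match a with
    | Sum.inl (p, _) =>
        if w.2 = st13cnr k p ∧ p ∈ Finset.Icc 1 m then x (p, w.1) / (c p) else 0
    | Sum.inr (Sum.inl (q', _)) =>
        if q' = w.1 then
          (1 - ∑ p ∈ Finset.Icc w.2 (w.2 + k - 1), x (p, w.1)) / (D w.1) else 0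
    | Sum.inr (Sum.inr _) => 0
lemma st13mem_corner {m n k : ℕ} {i j : ℕ} :
    (i, j) ∈ cornerPts m n k ↔
      i ∈ Finset.Icc 1 m ∧ j ∈ Finset.Icc 1 n ∧ i % k = 1 % k ∧ j % k = 1 % k := by
  simp only [cornerPts, gridIcc, mem_filter, Finset.mem_product]; tauto

lemma st13boxW_sum {m k : ℕ} {i j l : ℕ} (hk : 2 ≤ k) (hm : k ∣ m)
    (hi1 : 1 ≤ i) (him : i ≤ m) (himod : i % k = 1 % k) (hl : l < k) (g : ℕ × ℕ → ℝ) :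
    ∑ z ∈ boxW m k i j l, g z = ∑ p ∈ Finset.Icc i (i + k - 1), g (p, j + l) := by
  have hbl := st13block_le hk hm hi1 him himod
  have hset : boxW m k i j l = (Finset.Icc i (i + k - 1)) ×ˢ {j + l} := by
    ext z
    simp only [boxW, blockF, mem_filter, Finset.mem_product, mem_Icc, Finset.mem_singleton]
    constructor
    · rintro ⟨⟨h1, -⟩, -, h4⟩; exact ⟨h1, h4⟩
    · rintro ⟨⟨h1, h2⟩, h3⟩
      exact ⟨⟨⟨h1, h2⟩, by omega, by omega⟩, ⟨by omega, by omega⟩, h3⟩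
  rw [hset, Finset.sum_product]
  simp
/-- if the LP relaxation of the `Rec(k,ν,2)` system (row sums, column sums and the
box constraints `Σ_{W(i,j+l)} x ≤ min{1, v(i,j)}`) has a fractional solution with entries in
`[0,1]`, then it has a solution with entries in `{0,1}`. -/
theorem stmt13 (k ν m n : ℕ) (hk : 2 ≤ k) (hν : k ≤ ν)
    (hm : k ∣ m) (hm0 : 0 < m) (hn : k ∣ n) (hn0 : 0 < n)
    (r c : ℕ → ℕ) (v : ℕ × ℕ → ℕ) (hv : ∀ w ∈ cornerPts m n k, v w = 0 ∨ v w = ν)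
    (x : ℕ × ℕ → ℝ)
    (hx01 : ∀ p ∈ gridIcc m n, 0 ≤ x p ∧ x p ≤ 1)
    (hxrow : ∀ q ∈ Finset.Icc 1 n, ∑ p ∈ Finset.Icc 1 m, x (p, q) = (r q : ℝ))
    (hxcol : ∀ p ∈ Finset.Icc 1 m, ∑ q ∈ Finset.Icc 1 n, x (p, q) = (c p : ℝ))
    (hxbox : ∀ w ∈ cornerPts m n k, ∀ l < k,
      ∑ z ∈ boxW m k w.1 w.2 l, x z ≤ (min 1 (v w) : ℕ)) :
    ∃ ξ : ℕ × ℕ → ℝ,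
      (∀ p ∈ gridIcc m n, ξ p = 0 ∨ ξ p = 1) ∧
      (∀ q ∈ Finset.Icc 1 n, ∑ p ∈ Finset.Icc 1 m, ξ (p, q) = (r q : ℝ)) ∧
      (∀ p ∈ Finset.Icc 1 m, ∑ q ∈ Finset.Icc 1 n, ξ (p, q) = (c p : ℝ)) ∧
      (∀ w ∈ cornerPts m n k, ∀ l < k,
        ∑ z ∈ boxW m k w.1 w.2 l, ξ z ≤ (min 1 (v w) : ℕ)) := by
  classical
  set D := st13D m k v r with hDdef
  set X := st13X m k c D x with hXdef
  -- basic facts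
  have hI : ∀ i ∈ st13I m k, 1 ≤ i ∧ i ≤ m ∧ i % k = 1 % k := by
    intro i hi; simp only [st13I, mem_filter, mem_Icc] at hi; exact ⟨hi.1.1, hi.1.2, hi.2⟩
  have hblk : ∀ i ∈ st13I m k, Finset.Icc i (i + k - 1) ⊆ Finset.Icc 1 m := by
    intro i hi p hp
    obtain ⟨h1, h2, h3⟩ := hI i hi
    have h4 := st13block_le hk hm h1 h2 h3
    rw [mem_Icc] at *; omega
  have hcnrblk : ∀ i ∈ st13I m k, ∀ p ∈ Finset.Icc i (i + k - 1), st13cnr k p = i := by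
    intro i hi p hp
    obtain ⟨hi1, hi2, hi3⟩ := hI i hi
    rw [mem_Icc] at hp
    exact st13cnr_eq hk hi3 hi1 hp.1 hp.2
  have hx0 : ∀ p ∈ Finset.Icc 1 m, ∀ q ∈ Finset.Icc 1 n, 0 ≤ x (p, q) := by
    intro p hp q hq
    exact (hx01 (p, q) (by simp only [gridIcc, Finset.mem_product]; exact ⟨hp, hq⟩)).1
  have hcq : ∀ q ∈ Finset.Icc 1 n, st13cnr k q ∈ Finset.Icc 1 n ∧ st13cnr k q % k = 1 % k
      ∧ st13cnr k q ≤ q ∧ q ≤ st13cnr k q + k - 1 := by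
    intro q hq; rw [mem_Icc] at hq
    have h1 := st13cnr_le (k := k) (p := q) (by omega) hq.1
    have h2 := st13le_cnr (k := k) (p := q) (by omega) hq.1
    refine ⟨?_, st13cnr_mod, h1, h2⟩
    rw [mem_Icc]
    constructor
    · unfold st13cnr; omega
    · omega
  have hcorner : ∀ q ∈ Finset.Icc 1 n, ∀ i ∈ st13I m k,
      (i, st13cnr k q) ∈ cornerPts m n k := by
    intro q hq i hi
    obtain ⟨hi1, hi2, hi3⟩ := hI i hi
    obtain ⟨hq1, hq2, -, -⟩ := hcq q hq
    rw [st13mem_corner]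
    exact ⟨by rw [mem_Icc]; omega, hq1, hi3, hq2⟩
  have hsbound : ∀ q ∈ Finset.Icc 1 n, ∀ i ∈ st13I m k,
      ∑ p ∈ Finset.Icc i (i + k - 1), x (p, q) ≤ (min 1 (v (i, st13cnr k q)) : ℕ) := by
    intro q hq i hi
    obtain ⟨hq1, hq2, hq3, hq4⟩ := hcq q hq
    obtain ⟨hi1, hi2, hi3⟩ := hI i hi
    have hc := hcorner q hq i hi
    rw [mem_Icc] at hq
    have hl : q - st13cnr k q < k := by omega
    have hb := hxbox (i, st13cnr k q) hc (q - st13cnr k q) hl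
    rw [st13boxW_sum hk hm hi1 hi2 hi3 hl] at hb
    have he : st13cnr k q + (q - st13cnr k q) = q := by omega
    rw [he] at hb
    exact hb
  have hs1 : ∀ q ∈ Finset.Icc 1 n, ∀ i ∈ st13I m k,
      ∑ p ∈ Finset.Icc i (i + k - 1), x (p, q) ≤ 1 := by
    intro q hq i hi
    refine (hsbound q hq i hi).trans ?_
    have hmin : min 1 (v (i, st13cnr k q)) ≤ 1 := min_le_left _ _
    exact_mod_cast hmin
  have hs0 : ∀ q ∈ Finset.Icc 1 n, ∀ i ∈ st13I m k, v (i, st13cnr k q) = 0 →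
      ∀ p ∈ Finset.Icc i (i + k - 1), x (p, q) = 0 := by
    intro q hq i hi hv0
    have hb := hsbound q hq i hi
    rw [hv0] at hb
    norm_num at hb
    have hnn : ∀ p ∈ Finset.Icc i (i + k - 1), 0 ≤ x (p, q) :=
      fun p hp => hx0 p (hblk i hi hp) q hq
    exact (Finset.sum_eq_zero_iff_of_nonneg hnn).1 (le_antisymm hb (Finset.sum_nonneg hnn))
  have hsall : ∀ q ∈ Finset.Icc 1 n,
      ∑ i ∈ st13I m k, ∑ p ∈ Finset.Icc i (i + k - 1), x (p, q) = (r q : ℝ) := by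
    intro q hq; rw [← st13sum_blocks hk hm]; exact hxrow q hq
  have hLset : ∀ q ∈ Finset.Icc 1 n,
      ∑ i ∈ (st13I m k).filter (fun i => v (i, st13cnr k q) ≠ 0),
        ∑ p ∈ Finset.Icc i (i + k - 1), x (p, q) = (r q : ℝ) := by
    intro q hq
    rw [← hsall q hq]
    apply Finset.sum_filter_of_ne
    intro i hi hne
    by_contra hvv
    try rw [not_not] at hvv
    exact hne (Finset.sum_eq_zero (fun p hp => hs0 q hq i hi hvv p hp))
  have hrA : ∀ q ∈ Finset.Icc 1 n, r q ≤ st13Aq m k v q := by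
    intro q hq
    have hb : ∑ i ∈ (st13I m k).filter (fun i => v (i, st13cnr k q) ≠ 0),
        ∑ p ∈ Finset.Icc i (i + k - 1), x (p, q)
        ≤ ∑ _i ∈ (st13I m k).filter (fun i => v (i, st13cnr k q) ≠ 0), (1 : ℝ) :=
      Finset.sum_le_sum (fun i hi => hs1 q hq i (Finset.filter_subset _ _ hi))
    rw [hLset q hq, Finset.sum_const, nsmul_eq_mul, mul_one] at hb
    have hb2 : (r q : ℝ) ≤ (st13Aq m k v q : ℝ) := hb
    exact_mod_cast hb2
  have hall1 : ∀ q ∈ Finset.Icc 1 n, D q = 0 →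
      ∀ i ∈ (st13I m k).filter (fun i => v (i, st13cnr k q) ≠ 0),
        ∑ p ∈ Finset.Icc i (i + k - 1), x (p, q) = 1 := by
    intro q hq hD0
    have hAr : st13Aq m k v q = r q := by
      have := hrA q hq
      rw [hDdef] at hD0
      unfold st13D at hD0
      omega
    by_contra hcon
    push_neg at hcon
    obtain ⟨i0, hi0, hne⟩ := hcon
    have hlt : ∑ p ∈ Finset.Icc i0 (i0 + k - 1), x (p, q) < 1 :=
      lt_of_le_of_ne (hs1 q hq i0 (Finset.filter_subset _ _ hi0)) hne
    have hstrict := Finset.sum_lt_sum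
      (f := fun i => ∑ p ∈ Finset.Icc i (i + k - 1), x (p, q)) (g := fun _ => (1 : ℝ))
      (fun i hi => hs1 q hq i (Finset.filter_subset _ _ hi)) ⟨i0, hi0, hlt⟩
    rw [hLset q hq, Finset.sum_const, nsmul_eq_mul, mul_one] at hstrict
    have hlt2 : (r q : ℝ) < (st13Aq m k v q : ℝ) := hstrict
    have : r q < st13Aq m k v q := by exact_mod_cast hlt2
    omega
  have hc0 : ∀ p ∈ Finset.Icc 1 m, c p = 0 → ∀ q ∈ Finset.Icc 1 n, x (p, q) = 0 := by
    intro p hp hcp q hq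
    have h := hxcol p hp
    rw [hcp] at h
    norm_num at h
    exact (Finset.sum_eq_zero_iff_of_nonneg (fun q' hq' => hx0 p hp q' hq')).1 h q hq
  have hrc : ∑ q ∈ Finset.Icc 1 n, r q = ∑ p ∈ Finset.Icc 1 m, c p := by
    have hcast : ((∑ q ∈ Finset.Icc 1 n, r q : ℕ) : ℝ)
        = ((∑ p ∈ Finset.Icc 1 m, c p : ℕ) : ℝ) := by
      push_cast
      calc ∑ q ∈ Finset.Icc 1 n, (r q : ℝ)
          = ∑ q ∈ Finset.Icc 1 n, ∑ p ∈ Finset.Icc 1 m, x (p, q) :=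
            Finset.sum_congr rfl (fun q hq => (hxrow q hq).symm)
        _ = ∑ p ∈ Finset.Icc 1 m, ∑ q ∈ Finset.Icc 1 n, x (p, q) := Finset.sum_comm
        _ = ∑ p ∈ Finset.Icc 1 m, (c p : ℝ) :=
            Finset.sum_congr rfl (fun p hp => hxcol p hp)
    exact_mod_cast hcast
  have hLprod : st13L m n k v ⊆ (Finset.Icc 1 n) ×ˢ st13I m k := Finset.filter_subset _ _
  -- nonnegativity of the fractional matching weights
  have hXnn : ∀ w ∈ (Finset.Icc 1 n) ×ˢ st13I m k, ∀ a : st13A, 0 ≤ X w a := by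
    rintro ⟨q, i⟩ hw a
    rw [Finset.mem_product] at hw
    rcases a with ⟨p, cc⟩ | (⟨q', d⟩ | w')
    · show 0 ≤ if (q, i).2 = st13cnr k p ∧ p ∈ Finset.Icc 1 m then x (p, (q, i).1) / (c p) else 0
      split
      · next h => exact div_nonneg (hx0 p h.2 q hw.1) (Nat.cast_nonneg _)
      · exact le_refl _
    · show 0 ≤ if q' = (q, i).1 then
          (1 - ∑ p ∈ Finset.Icc (q, i).2 ((q, i).2 + k - 1), x (p, (q, i).1)) / (D (q, i).1)
          else 0
      split
      · apply div_nonneg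
        · have := hs1 q hw.1 i hw.2
          simp only at this ⊢
          linarith
        · exact Nat.cast_nonneg _
      · exact le_refl _
    · exact le_refl _
  -- left degrees equal one
  have hXleft : ∀ w ∈ st13L m n k v, ∑ a ∈ st13N k c D w, X w a = 1 := by
    rintro ⟨q, i⟩ hw
    rw [st13mem_L] at hw
    obtain ⟨hq, hi, hvne⟩ := hw
    rw [st13N, Finset.sum_union st13disj_cop_dum]
    have hcop : ∑ a ∈ st13cop c (Finset.Icc (q, i).2 ((q, i).2 + k - 1)), X (q, i) a
        = ∑ p ∈ Finset.Icc i (i + k - 1), x (p, q) := by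
      rw [st13sum_cop]
      apply Finset.sum_congr rfl
      intro p hp
      have hpm : p ∈ Finset.Icc 1 m := hblk i hi hp
      have hcnr : st13cnr k p = i := hcnrblk i hi p hp
      have hbody : ∀ cc ∈ Finset.Icc 1 (c p),
          X (q, i) (Sum.inl (p, cc)) = x (p, q) / (c p) := by
        intro cc _
        show (if (q, i).2 = st13cnr k p ∧ p ∈ Finset.Icc 1 m
            then x (p, (q, i).1) / (c p) else 0) = x (p, q) / (c p)
        rw [if_pos ⟨hcnr.symm, hpm⟩]
      rw [Finset.sum_congr rfl hbody, Finset.sum_const, Nat.card_Icc, Nat.add_sub_cancel]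
      rcases Nat.eq_zero_or_pos (c p) with h0 | hpos
      · rw [h0, hc0 p hpm h0 q hq]
        simp
      · have hcne : (c p : ℝ) ≠ 0 := Nat.cast_ne_zero.2 (by omega)
        rw [nsmul_eq_mul]
        field_simp
    have hdum : ∑ a ∈ st13dum D {(q, i).1}, X (q, i) a
        = 1 - ∑ p ∈ Finset.Icc i (i + k - 1), x (p, q) := by
      rw [st13sum_dum, Finset.sum_singleton]
      have hbody : ∀ d ∈ Finset.Icc 1 (D q),
          X (q, i) (Sum.inr (Sum.inl (q, d)))
            = (1 - ∑ p ∈ Finset.Icc i (i + k - 1), x (p, q)) / (D q) := by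
        intro d _
        show (if q = (q, i).1 then
            (1 - ∑ p ∈ Finset.Icc (q, i).2 ((q, i).2 + k - 1), x (p, (q, i).1)) / (D (q, i).1)
            else 0) = _
        rw [if_pos rfl]
      rw [Finset.sum_congr rfl hbody, Finset.sum_const, Nat.card_Icc, Nat.add_sub_cancel]
      rcases Nat.eq_zero_or_pos (D q) with h0 | hpos
      · have hone := hall1 q hq h0 i (by rw [mem_filter]; exact ⟨hi, hvne⟩)
        rw [h0, hone]
        simp
      · have hDne : (D q : ℝ) ≠ 0 := Nat.cast_ne_zero.2 (by omega)
        rw [nsmul_eq_mul]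
        field_simp
    rw [hcop, hdum]
    ring
  -- right degrees at most one
  have hXright : ∀ a : st13A, (∃ w0 ∈ st13L m n k v, a ∈ st13N k c D w0) →
      ∑ w ∈ st13L m n k v, X w a ≤ 1 := by
    rintro a ⟨w0, hw0L, hw0N⟩
    have hw0L' := hw0L
    rw [st13mem_L] at hw0L'
    rw [st13N, Finset.mem_union] at hw0N
    rcases hw0N with hcopm | hdumm
    · rw [st13mem_cop] at hcopm
      obtain ⟨p, cc, rfl, hpB, hccB⟩ := hcopm
      have hpm : p ∈ Finset.Icc 1 m := hblk w0.2 hw0L'.2.1 hpB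
      have hcp : 1 ≤ c p := by rw [mem_Icc] at hccB; omega
      have h1 : ∑ w ∈ st13L m n k v, X w (Sum.inl (p, cc))
          ≤ ∑ w ∈ (Finset.Icc 1 n) ×ˢ st13I m k, X w (Sum.inl (p, cc)) :=
        Finset.sum_le_sum_of_subset_of_nonneg hLprod (fun w hw _ => hXnn w hw _)
      refine h1.trans ?_
      rw [Finset.sum_product]
      have h2 : ∀ q ∈ Finset.Icc 1 n,
          ∑ i ∈ st13I m k, X (q, i) (Sum.inl (p, cc)) ≤ x (p, q) / (c p) := by
        intro q hq
        have hbody : ∀ i ∈ st13I m k, X (q, i) (Sum.inl (p, cc))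
            = if i = st13cnr k p then x (p, q) / (c p) else 0 := by
          intro i _
          show (if (q, i).2 = st13cnr k p ∧ p ∈ Finset.Icc 1 m
              then x (p, (q, i).1) / (c p) else 0) = _
          simp [hpm]
        rw [Finset.sum_congr rfl hbody,
          Finset.sum_ite_eq' (st13I m k) (st13cnr k p) (fun _ => x (p, q) / (c p))]
        split
        · exact le_refl _
        · exact div_nonneg (hx0 p hpm q hq) (Nat.cast_nonneg _)
      calc ∑ q ∈ Finset.Icc 1 n, ∑ i ∈ st13I m k, X (q, i) (Sum.inl (p, cc))
          ≤ ∑ q ∈ Finset.Icc 1 n, x (p, q) / (c p) := Finset.sum_le_sum h2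
        _ = (∑ q ∈ Finset.Icc 1 n, x (p, q)) / (c p) := by rw [Finset.sum_div]
        _ = (c p : ℝ) / (c p) := by rw [hxcol p hpm]
        _ = 1 := div_self (Nat.cast_ne_zero.2 (by omega))
    · rw [st13mem_dum] at hdumm
      obtain ⟨q0, d, rfl, hq0B, hdB⟩ := hdumm
      rw [Finset.mem_singleton] at hq0B
      have hq0n : q0 ∈ Finset.Icc 1 n := by rw [hq0B]; exact hw0L'.1
      have hDpos : 1 ≤ D q0 := by rw [mem_Icc] at hdB; omega
      have hbody : ∀ w ∈ st13L m n k v, X w (Sum.inr (Sum.inl (q0, d)))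
          = if q0 = w.1 then
              (1 - ∑ p ∈ Finset.Icc w.2 (w.2 + k - 1), x (p, w.1)) / (D w.1) else 0 := by
        intro w _
        rfl
      rw [Finset.sum_congr rfl hbody, ← Finset.sum_filter]
      have himg : (st13L m n k v).filter (fun w => q0 = w.1)
          = ((st13I m k).filter (fun i => v (i, st13cnr k q0) ≠ 0)).image (fun i => (q0, i)) := by
        ext w
        simp only [mem_filter, st13mem_L, Finset.mem_image]
        constructor
        · rintro ⟨⟨h1, h2, h3⟩, h4⟩
          refine ⟨w.2, ⟨h2, ?_⟩, ?_⟩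
          · rw [h4]; exact h3
          · rw [h4]
        · rintro ⟨i, ⟨hiI, hiv⟩, rfl⟩
          exact ⟨⟨hq0n, hiI, hiv⟩, rfl⟩
      have hinj : ∀ i ∈ (st13I m k).filter (fun i => v (i, st13cnr k q0) ≠ 0),
          ∀ i' ∈ (st13I m k).filter (fun i => v (i, st13cnr k q0) ≠ 0),
          (q0, i) = (q0, i') → i = i' := by
        intro i _ i' _ h
        simpa using h
      rw [himg, Finset.sum_image hinj]
      dsimp only
      rw [← Finset.sum_div]
      have hsum1 : ∑ i ∈ (st13I m k).filter (fun i => v (i, st13cnr k q0) ≠ 0),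
          (1 - ∑ p ∈ Finset.Icc i (i + k - 1), x (p, q0))
          = (st13Aq m k v q0 : ℝ) - (r q0 : ℝ) := by
        rw [Finset.sum_sub_distrib, Finset.sum_const, nsmul_eq_mul, mul_one, hLset q0 hq0n]
        rfl
      have hDc : (D q0 : ℝ) = (st13Aq m k v q0 : ℝ) - (r q0 : ℝ) := by
        rw [hDdef]
        unfold st13D
        rw [Nat.cast_sub (hrA q0 hq0n)]
      rw [hsum1, ← hDc, div_self (Nat.cast_ne_zero.2 (by omega))]
  -- Hall's condition
  have hHall : ∀ S : Finset (ℕ × ℕ), S.card ≤ (S.biUnion (st13t m n k v c D)).card := by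
    intro S
    set S1 := S.filter (fun w => w ∈ st13L m n k v) with hS1
    set S2 := S.filter (fun w => w ∉ st13L m n k v) with hS2
    have hS1L : S1 ⊆ st13L m n k v := by
      intro w hw; rw [hS1, mem_filter] at hw; exact hw.2
    have hcard : S1.card + S2.card = S.card :=
      Finset.card_filter_add_card_filter_not _
    have hsub1 : S1.biUnion (st13N k c D) ⊆ S.biUnion (st13t m n k v c D) := by
      intro a ha
      rw [Finset.mem_biUnion] at ha ⊢
      obtain ⟨w, hw, hwa⟩ := ha
      rw [hS1, mem_filter] at hw
      exact ⟨w, hw.1, by rw [st13t, if_pos hw.2]; exact hwa⟩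
    have hsub2 : S2.image (fun w => (Sum.inr (Sum.inr w) : st13A))
        ⊆ S.biUnion (st13t m n k v c D) := by
      intro a ha
      rw [Finset.mem_image] at ha
      obtain ⟨w, hw, rfl⟩ := ha
      rw [hS2, mem_filter] at hw
      rw [Finset.mem_biUnion]
      exact ⟨w, hw.1, by rw [st13t, if_neg hw.2]; exact Finset.mem_singleton_self _⟩
    have hdisj : Disjoint (S1.biUnion (st13N k c D))
        (S2.image (fun w => (Sum.inr (Sum.inr w) : st13A))) := by
      rw [Finset.disjoint_left]
      intro a ha ha2
      rw [Finset.mem_biUnion] at ha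
      obtain ⟨w, -, hwa⟩ := ha
      rw [st13N, Finset.mem_union] at hwa
      rw [Finset.mem_image] at ha2
      obtain ⟨w', -, rfl⟩ := ha2
      rcases hwa with h | h
      · rw [st13mem_cop] at h; obtain ⟨p, cc, h, -, -⟩ := h; simp at h
      · rw [st13mem_dum] at h; obtain ⟨qq, dd, h, -, -⟩ := h; simp at h
    have hc2 : (S2.image (fun w => (Sum.inr (Sum.inr w) : st13A))).card = S2.card :=
      Finset.card_image_of_injective _ (fun w w' h => by simpa using h)
    have hmain : S1.card ≤ (S1.biUnion (st13N k c D)).card := by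
      have hNT : ∀ w ∈ S1, st13N k c D w ⊆ S1.biUnion (st13N k c D) :=
        fun w hw => Finset.subset_biUnion_of_mem _ hw
      have hreal : (S1.card : ℝ) ≤ ((S1.biUnion (st13N k c D)).card : ℝ) := by
        calc (S1.card : ℝ) = ∑ _w ∈ S1, (1 : ℝ) := by
              rw [Finset.sum_const, nsmul_eq_mul, mul_one]
          _ = ∑ w ∈ S1, ∑ a ∈ st13N k c D w, X w a :=
              Finset.sum_congr rfl (fun w hw => (hXleft w (hS1L hw)).symm)
          _ = ∑ w ∈ S1, ∑ a ∈ S1.biUnion (st13N k c D),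
                (if a ∈ st13N k c D w then X w a else 0) := by
              apply Finset.sum_congr rfl
              intro w hw
              rw [Finset.sum_ite_mem, Finset.inter_eq_right.mpr (hNT w hw)]
          _ = ∑ a ∈ S1.biUnion (st13N k c D), ∑ w ∈ S1,
                (if a ∈ st13N k c D w then X w a else 0) := Finset.sum_comm
          _ ≤ ∑ _a ∈ S1.biUnion (st13N k c D), (1 : ℝ) := by
              apply Finset.sum_le_sum
              intro a ha
              rw [Finset.mem_biUnion] at ha
              obtain ⟨w0, hw0, hw0a⟩ := ha
              have hb : ∑ w ∈ st13L m n k v, X w a ≤ 1 :=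
                hXright a ⟨w0, hS1L hw0, hw0a⟩
              refine le_trans ?_ hb
              have step1 : ∑ w ∈ S1, (if a ∈ st13N k c D w then X w a else 0)
                  ≤ ∑ w ∈ S1, X w a := by
                apply Finset.sum_le_sum
                intro w hw
                split
                · exact le_refl _
                · exact hXnn w (hLprod (hS1L hw)) a
              refine step1.trans ?_
              exact Finset.sum_le_sum_of_subset_of_nonneg hS1L
                (fun w hw _ => hXnn w (hLprod hw) a)
          _ = ((S1.biUnion (st13N k c D)).card : ℝ) := by
              rw [Finset.sum_const, nsmul_eq_mul, mul_one]
      exact_mod_cast hreal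
    calc S.card = S1.card + S2.card := hcard.symm
      _ ≤ (S1.biUnion (st13N k c D)).card
          + (S2.image (fun w => (Sum.inr (Sum.inr w) : st13A))).card :=
            add_le_add hmain (le_of_eq hc2.symm)
      _ = ((S1.biUnion (st13N k c D))
          ∪ (S2.image (fun w => (Sum.inr (Sum.inr w) : st13A)))).card :=
            (Finset.card_union_of_disjoint hdisj).symm
      _ ≤ (S.biUnion (st13t m n k v c D)).card :=
            Finset.card_le_card (Finset.union_subset hsub1 hsub2)
  obtain ⟨f, hfinj, hft⟩ :=
    (Finset.all_card_le_biUnion_card_iff_exists_injective (st13t m n k v c D)).1 hHall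
  -- facts about the matching f
  have hfL : ∀ w, w ∉ st13L m n k v → f w = Sum.inr (Sum.inr w) := by
    intro w hw
    have h := hft w
    rwa [st13t, if_neg hw, Finset.mem_singleton] at h
  have hfN : ∀ w ∈ st13L m n k v, f w ∈ st13N k c D w := by
    intro w hw
    have h := hft w
    rwa [st13t, if_pos hw] at h
  have hfcop : ∀ w ∈ st13L m n k v, ∀ p cc, f w = Sum.inl (p, cc) →
      w.2 = st13cnr k p ∧ p ∈ Finset.Icc w.2 (w.2 + k - 1) ∧ cc ∈ Finset.Icc 1 (c p) := by
    intro w hw p cc he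
    have h := hfN w hw
    rw [st13N, Finset.mem_union] at h
    rcases h with h | h
    · rw [st13mem_cop] at h
      obtain ⟨p', cc', heq, hp', hcc'⟩ := h
      rw [he] at heq
      simp only [Sum.inl.injEq, Prod.mk.injEq] at heq
      obtain ⟨rfl, rfl⟩ := heq
      have hw2 := st13mem_L.1 hw
      refine ⟨(hcnrblk w.2 hw2.2.1 p hp').symm, hp', hcc'⟩
    · rw [st13mem_dum] at h
      obtain ⟨qq, dd, heq, -, -⟩ := h
      rw [he] at heq
      exact absurd heq (by simp)
  have hfdum : ∀ w ∈ st13L m n k v, ∀ q d, f w = Sum.inr (Sum.inl (q, d)) →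
      w.1 = q ∧ d ∈ Finset.Icc 1 (D q) := by
    intro w hw q d he
    have h := hfN w hw
    rw [st13N, Finset.mem_union] at h
    rcases h with h | h
    · rw [st13mem_cop] at h
      obtain ⟨p', cc', heq, -, -⟩ := h
      rw [he] at heq
      exact absurd heq (by simp)
    · rw [st13mem_dum] at h
      obtain ⟨qq, dd, heq, hqq, hdd⟩ := h
      rw [Finset.mem_singleton] at hqq
      rw [he] at heq
      simp only [Sum.inr.injEq, Sum.inl.injEq, Prod.mk.injEq] at heq
      obtain ⟨rfl, rfl⟩ := heq
      exact ⟨hqq.symm, hdd⟩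
  -- the image of L under f is exactly R
  have hNR : ∀ w ∈ st13L m n k v,
      st13N k c D w ⊆ st13cop c (Finset.Icc 1 m) ∪ st13dum D (Finset.Icc 1 n) := by
    intro w hw
    rw [st13mem_L] at hw
    rw [st13N]
    apply Finset.union_subset_union
    · exact st13cop_mono (hblk w.2 hw.2.1)
    · apply st13dum_mono
      intro y hy
      rw [Finset.mem_singleton] at hy
      rw [hy]
      exact hw.1
  have hcardR : (st13cop c (Finset.Icc 1 m) ∪ st13dum D (Finset.Icc 1 n)).card
      = (∑ p ∈ Finset.Icc 1 m, c p) + ∑ q ∈ Finset.Icc 1 n, D q := by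
    rw [Finset.card_union_of_disjoint st13disj_cop_dum, st13card_cop, st13card_dum]
  have hcardL : (st13L m n k v).card = ∑ q ∈ Finset.Icc 1 n, st13Aq m k v q := by
    rw [st13L, Finset.card_filter, Finset.sum_product]
    apply Finset.sum_congr rfl
    intro q hq
    rw [st13Aq, Finset.card_filter]
  have hLReq : (st13L m n k v).card
      = (st13cop c (Finset.Icc 1 m) ∪ st13dum D (Finset.Icc 1 n)).card := by
    rw [hcardL, hcardR]
    have hAD : ∀ q ∈ Finset.Icc 1 n, st13Aq m k v q = D q + r q := by
      intro q hq
      rw [hDdef]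
      unfold st13D
      have := hrA q hq
      omega
    rw [Finset.sum_congr rfl hAD, Finset.sum_add_distrib, hrc]
    omega
  have hLim : (st13L m n k v).image f
      = st13cop c (Finset.Icc 1 m) ∪ st13dum D (Finset.Icc 1 n) := by
    apply Finset.eq_of_subset_of_card_le
    · intro a ha
      rw [Finset.mem_image] at ha
      obtain ⟨w, hw, rfl⟩ := ha
      exact hNR w hw (hfN w hw)
    · rw [Finset.card_image_of_injective _ hfinj, hLReq]
  have hsurj : ∀ a ∈ st13cop c (Finset.Icc 1 m) ∪ st13dum D (Finset.Icc 1 n),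
      ∃ w ∈ st13L m n k v, f w = a := by
    intro a ha
    rw [← hLim, Finset.mem_image] at ha
    obtain ⟨w, hw, he⟩ := ha
    exact ⟨w, hw, he⟩
  -- the inner block sums of the rounded solution
  have hinner : ∀ q : ℕ, ∀ i ∈ st13I m k,
      ∑ p ∈ Finset.Icc i (i + k - 1),
        (if ∃ cc, f (q, st13cnr k p) = Sum.inl (p, cc) then (1 : ℝ) else 0)
      = if ((q, i) ∈ st13L m n k v ∧ ∃ p0 cc0, f (q, i) = Sum.inl (p0, cc0))
          then 1 else 0 := by
    intro q i hi
    have hb : ∀ p ∈ Finset.Icc i (i + k - 1),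
        (if ∃ cc, f (q, st13cnr k p) = Sum.inl (p, cc) then (1 : ℝ) else 0)
        = if ∃ cc, f (q, i) = Sum.inl (p, cc) then (1 : ℝ) else 0 := by
      intro p hp; rw [hcnrblk i hi p hp]
    rw [Finset.sum_congr rfl hb]
    by_cases hL : (q, i) ∈ st13L m n k v
    · rcases hf2 : f (q, i) with ⟨p0, cc0⟩ | other
      · obtain ⟨hw2, hp0blk, -⟩ := hfcop (q, i) hL p0 cc0 hf2
        rw [if_pos ⟨hL, p0, cc0, rfl⟩]
        have hb2 : ∀ p ∈ Finset.Icc i (i + k - 1),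
            (if ∃ cc, (Sum.inl (p0, cc0) : st13A) = Sum.inl (p, cc) then (1 : ℝ) else 0)
            = if p = p0 then (1 : ℝ) else 0 := by
          intro p hp
          by_cases hpp : p = p0
          · subst hpp; rw [if_pos ⟨cc0, rfl⟩, if_pos rfl]
          · rw [if_neg, if_neg hpp]
            rintro ⟨cc, hcc⟩
            simp only [Sum.inl.injEq, Prod.mk.injEq] at hcc
            exact hpp hcc.1.symm
        rw [Finset.sum_congr rfl hb2,
          Finset.sum_ite_eq' (Finset.Icc i (i + k - 1)) p0 (fun _ => (1 : ℝ))]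
        rw [if_pos]
        exact hp0blk
      · rw [if_neg]
        · apply Finset.sum_eq_zero
          intro p hp
          rw [if_neg]
          rintro ⟨cc, hcc⟩
          simp at hcc
        · rintro ⟨-, p0, cc0, hcc0⟩
          simp at hcc0
    · rw [if_neg (fun h => hL h.1)]
      apply Finset.sum_eq_zero
      intro p hp
      rw [if_neg]
      rintro ⟨cc, hcc⟩
      rw [hfL _ hL] at hcc
      simp at hcc
  -- column counts
  have hMp : ∀ p ∈ Finset.Icc 1 m,
      ((st13L m n k v).filter (fun w => ∃ cc, f w = Sum.inl (p, cc))).card = c p := by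
    intro p hp
    have himg2 : ((st13L m n k v).filter (fun w => ∃ cc, f w = Sum.inl (p, cc))).image f
        = (Finset.Icc 1 (c p)).image (fun cc => (Sum.inl (p, cc) : st13A)) := by
      ext a
      rw [Finset.mem_image, Finset.mem_image]
      constructor
      · rintro ⟨w, hw, rfl⟩
        rw [mem_filter] at hw
        obtain ⟨hwL, cc, hcc⟩ := hw
        obtain ⟨-, -, hccm⟩ := hfcop w hwL p cc hcc
        exact ⟨cc, hccm, hcc.symm⟩
      · rintro ⟨cc, hccm, rfl⟩
        have haR : (Sum.inl (p, cc) : st13A)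
            ∈ st13cop c (Finset.Icc 1 m) ∪ st13dum D (Finset.Icc 1 n) := by
          rw [Finset.mem_union]
          left
          rw [st13mem_cop]
          exact ⟨p, cc, rfl, hp, hccm⟩
        obtain ⟨w, hwL, hwf⟩ := hsurj _ haR
        exact ⟨w, by rw [mem_filter]; exact ⟨hwL, cc, hwf⟩, hwf⟩
    have h1 := Finset.card_image_of_injective
      ((st13L m n k v).filter (fun w => ∃ cc, f w = Sum.inl (p, cc))) hfinj
    rw [himg2] at h1
    rw [← h1, Finset.card_image_of_injective, Nat.card_Icc]
    · omega
    · intro a b hab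
      simpa using hab
  have hcol : ∀ p ∈ Finset.Icc 1 m,
      ∑ q ∈ Finset.Icc 1 n,
        (if ∃ cc, f (q, st13cnr k p) = Sum.inl (p, cc) then (1 : ℝ) else 0) = (c p : ℝ) := by
    intro p hp
    rw [Finset.sum_boole]
    have hQMp : ((Finset.Icc 1 n).filter
          (fun q => ∃ cc, f (q, st13cnr k p) = Sum.inl (p, cc))).card
        = ((st13L m n k v).filter (fun w => ∃ cc, f w = Sum.inl (p, cc))).card := by
      apply Finset.card_bij (fun q _ => (q, st13cnr k p))
      · intro q hq
        rw [mem_filter] at hq ⊢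
        obtain ⟨hq1, cc, hcc⟩ := hq
        have hL : (q, st13cnr k p) ∈ st13L m n k v := by
          by_contra hnL
          rw [hfL _ hnL] at hcc
          simp at hcc
        exact ⟨hL, cc, hcc⟩
      · intro q hq q' hq' he
        simpa using congrArg Prod.fst he
      · intro w hw
        rw [mem_filter] at hw
        obtain ⟨hwL, cc, hcc⟩ := hw
        obtain ⟨hw2, -, -⟩ := hfcop w hwL p cc hcc
        refine ⟨w.1, ?_, ?_⟩
        · rw [mem_filter]
          refine ⟨(st13mem_L.1 hwL).1, cc, ?_⟩
          rw [← hw2]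
          simpa only [Prod.mk.eta] using hcc
        · rw [← hw2]
    rw [hQMp, hMp p hp]
  -- row counts
  have hrow : ∀ q ∈ Finset.Icc 1 n,
      ∑ p ∈ Finset.Icc 1 m,
        (if ∃ cc, f (q, st13cnr k p) = Sum.inl (p, cc) then (1 : ℝ) else 0) = (r q : ℝ) := by
    intro q hq
    rw [st13sum_blocks hk hm, Finset.sum_congr rfl (fun i hi => hinner q i hi),
      Finset.sum_boole]
    have hLqA : ((st13L m n k v).filter (fun w => w.1 = q)).card = st13Aq m k v q := by
      rw [st13Aq]
      apply Finset.card_bij (fun w _ => w.2)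
      · intro w hw
        rw [mem_filter] at hw
        obtain ⟨hwL, hw1⟩ := hw
        have h := st13mem_L.1 hwL
        rw [mem_filter]
        refine ⟨h.2.1, ?_⟩
        rw [← hw1]
        exact h.2.2
      · intro w hw w' hw' he
        rw [mem_filter] at hw hw'
        have h1 : w = (q, w.2) := by rw [← hw.2]
        have h2 : w' = (q, w'.2) := by rw [← hw'.2]
        rw [h1, h2, he]
      · intro i hi
        rw [mem_filter] at hi
        refine ⟨(q, i), ?_, rfl⟩
        rw [mem_filter]
        exact ⟨st13mem_L.2 ⟨hq, hi.1, hi.2⟩, rfl⟩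
    have hLqD : (((st13L m n k v).filter (fun w => w.1 = q)).filter
          (fun w => ¬ ∃ p0 cc0, f w = Sum.inl (p0, cc0))).card = D q := by
      have himg : ((((st13L m n k v).filter (fun w => w.1 = q)).filter
            (fun w => ¬ ∃ p0 cc0, f w = Sum.inl (p0, cc0)))).image f = st13dum D {q} := by
        ext a
        constructor
        · intro ha
          rw [Finset.mem_image] at ha
          obtain ⟨w, hw, rfl⟩ := ha
          rw [mem_filter, mem_filter] at hw
          obtain ⟨⟨hwL, hw1⟩, hnP⟩ := hw
          have h := hfN w hwL
          rw [st13N, Finset.mem_union] at h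
          rcases h with h | h
          · rw [st13mem_cop] at h
            obtain ⟨p', cc', heq, -, -⟩ := h
            exact absurd ⟨p', cc', heq⟩ hnP
          · rw [st13mem_dum] at h
            obtain ⟨qq, dd, heq, hqq, hdd⟩ := h
            rw [Finset.mem_singleton] at hqq
            rw [st13mem_dum]
            exact ⟨qq, dd, heq, by rw [Finset.mem_singleton, hqq, hw1], hdd⟩
        · intro ha
          rw [st13mem_dum] at ha
          obtain ⟨qq, dd, rfl, hqq, hdd⟩ := ha
          rw [Finset.mem_singleton] at hqq
          subst hqq
          have haR : (Sum.inr (Sum.inl (qq, dd)) : st13A)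
              ∈ st13cop c (Finset.Icc 1 m) ∪ st13dum D (Finset.Icc 1 n) := by
            rw [Finset.mem_union]
            right
            rw [st13mem_dum]
            exact ⟨qq, dd, rfl, hq, hdd⟩
          obtain ⟨w, hwL, hwf⟩ := hsurj _ haR
          have hfd := hfdum w hwL qq dd hwf
          rw [Finset.mem_image]
          refine ⟨w, ?_, hwf⟩
          rw [mem_filter, mem_filter]
          refine ⟨⟨hwL, hfd.1⟩, ?_⟩
          rintro ⟨p0, cc0, hcc0⟩
          rw [hwf] at hcc0
          simp at hcc0
      have h1 := Finset.card_image_of_injective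
        ((((st13L m n k v).filter (fun w => w.1 = q)).filter
          (fun w => ¬ ∃ p0 cc0, f w = Sum.inl (p0, cc0)))) hfinj
      rw [himg] at h1
      rw [← h1, st13card_dum, Finset.sum_singleton]
    have hsplit := Finset.card_filter_add_card_filter_not
      (s := (st13L m n k v).filter (fun w => w.1 = q))
      (p := fun w => ∃ p0 cc0, f w = Sum.inl (p0, cc0))
    have hcnt : ((st13I m k).filter
          (fun i => ((q, i) ∈ st13L m n k v ∧ ∃ p0 cc0, f (q, i) = Sum.inl (p0, cc0)))).card
        = (((st13L m n k v).filter (fun w => w.1 = q)).filter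
          (fun w => ∃ p0 cc0, f w = Sum.inl (p0, cc0))).card := by
      apply Finset.card_bij (fun i _ => (q, i))
      · intro i hi
        rw [mem_filter] at hi
        rw [mem_filter, mem_filter]
        exact ⟨⟨hi.2.1, rfl⟩, hi.2.2⟩
      · intro i hi i' hi' he
        simpa using congrArg Prod.snd he
      · intro w hw
        rw [mem_filter, mem_filter] at hw
        obtain ⟨⟨hwL, hw1⟩, hP⟩ := hw
        have hwe : (q, w.2) = w := by rw [← hw1]
        refine ⟨w.2, ?_, hwe⟩
        rw [mem_filter]
        rw [hwe]
        exact ⟨(st13mem_L.1 hwL).2.1, hwL, hP⟩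
    have hDq : D q = st13Aq m k v q - r q := by rw [hDdef]; rfl
    have hfin : ((st13I m k).filter
          (fun i => ((q, i) ∈ st13L m n k v ∧ ∃ p0 cc0, f (q, i) = Sum.inl (p0, cc0)))).card
        = r q := by
      have := hrA q hq
      omega
    rw [hfin]
  -- assemble
  refine ⟨fun z => if ∃ cc, f (z.2, st13cnr k z.1) = Sum.inl (z.1, cc) then (1 : ℝ) else 0,
    ?_, ?_, ?_, ?_⟩
  · intro p hp
    dsimp only
    split
    · right; rfl
    · left; rfl
  · intro q hq
    dsimp only
    exact hrow q hq
  · intro p hp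
    dsimp only
    exact hcol p hp
  · rintro ⟨i, j⟩ hw l hl
    rw [st13mem_corner] at hw
    obtain ⟨hiIcc, hjIcc, himod, hjmod⟩ := hw
    have hiI : i ∈ st13I m k := by rw [st13I, mem_filter]; exact ⟨hiIcc, himod⟩
    rw [mem_Icc] at hiIcc hjIcc
    have hjn : j + k - 1 ≤ n := st13block_le hk hn hjIcc.1 hjIcc.2 hjmod
    have hqmem : j + l ∈ Finset.Icc 1 n := by rw [mem_Icc]; omega
    have hcnrq : st13cnr k (j + l) = j :=
      st13cnr_eq hk hjmod (by omega) (by omega) (by omega)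
    dsimp only
    rw [st13boxW_sum hk hm hiIcc.1 hiIcc.2 himod hl]
    dsimp only
    rw [hinner (j + l) i hiI]
    rcases hv (i, j) (by
        rw [st13mem_corner]
        exact ⟨by rw [mem_Icc]; omega, by rw [mem_Icc]; omega, himod, hjmod⟩) with hv0 | hvν
    · have hnL : (j + l, i) ∉ st13L m n k v := by
        rw [st13mem_L]
        rintro ⟨-, -, hne⟩
        rw [hcnrq, hv0] at hne
        exact hne rfl
      rw [if_neg (fun h => hnL h.1), hv0]
      simp
    · have hmin : (min 1 (v (i, j)) : ℕ) = 1 := by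
        rw [hvν]
        exact Nat.min_eq_left (by omega)
      rw [hmin]
      split
      · norm_num
      · norm_num
end

section
/- Let m, n ∈ ℕ, r_1,…,r_n, c_1,…,c_m ∈ ℕ₀, and let Z ⊆ [m]×[n] be a set of positions forced to zero. If there exists a real matrix x with entries x_{p,q} ∈ [0,1], (p,q) ∈ [m]×[n], satisfying x_{p,q} = 0 for all (p,q) ∈ Z, Σ_{p∈[m]} x_{p,q} = r_q for all q ∈ [n], and Σ_{q∈[n]} x_{p,q} = c_p for all p ∈ [m], then there exists a matrix with all entries in {0,1} satisfying the same constraints. -/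
open scoped Classical

private lemma sum01_nat (s : Finset ℕ) (f : ℕ → ℝ)
    (h : ∀ i ∈ s, f i = 0 ∨ f i = 1) : ∃ k : ℕ, ∑ i ∈ s, f i = k := by
  classical
  induction s using Finset.induction_on with
  | empty => exact ⟨0, by simp⟩
  | insert _ _ hx ih =>
    rename_i a s'
    obtain ⟨k, hk⟩ := ih (fun i hi => h i (Finset.mem_insert_of_mem hi))
    rcases h _ (Finset.mem_insert_self a s') with h0 | h1
    · exact ⟨k, by rw [Finset.sum_insert hx, h0, hk]; ring⟩
    · exact ⟨k + 1, by rw [Finset.sum_insert hx, h1, hk]; push_cast [Nat.cast_add]; ring⟩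

private lemma deg_ne_one (s : Finset ℕ) (y : ℕ → ℝ) (R : ℕ)
    (hsum : ∑ i ∈ s, y i = R) (h01 : ∀ i ∈ s, 0 ≤ y i ∧ y i ≤ 1) :
    (s.filter fun i => y i ≠ 0 ∧ y i ≠ 1).card ≠ 1 := by
  classical
  intro h1
  obtain ⟨i0, hi0⟩ := Finset.card_eq_one.mp h1
  have hi0mem : i0 ∈ s.filter fun i => y i ≠ 0 ∧ y i ≠ 1 := by
    rw [hi0]; exact Finset.mem_singleton_self i0
  rw [Finset.mem_filter] at hi0mem
  obtain ⟨hi0s, hne0, hne1⟩ := hi0mem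
  have h0 : 0 < y i0 := lt_of_le_of_ne (h01 i0 hi0s).1 (Ne.symm hne0)
  have h1' : y i0 < 1 := lt_of_le_of_ne (h01 i0 hi0s).2 hne1
  obtain ⟨k, hk⟩ : ∃ k : ℕ, ∑ i ∈ s.erase i0, y i = k := by
    apply sum01_nat
    intro i hi
    have his : i ∈ s := Finset.mem_of_mem_erase hi
    have hine : i ≠ i0 := Finset.ne_of_mem_erase hi
    by_contra hcon
    push_neg at hcon
    have : i ∈ s.filter fun i => y i ≠ 0 ∧ y i ≠ 1 :=
      Finset.mem_filter.mpr ⟨his, hcon.1, hcon.2⟩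
    rw [hi0] at this
    exact hine (Finset.mem_singleton.mp this)
  have hsplit : y i0 + ∑ i ∈ s.erase i0, y i = (R : ℝ) := by
    rw [← hsum, Finset.add_sum_erase s y hi0s]
  rw [hk] at hsplit
  have hyi0 : y i0 = (R : ℝ) - k := by linarith
  have hkR : k < R := by
    have : (k : ℝ) < R := by linarith
    exact_mod_cast this
  have hRk : R < k + 1 := by
    have : (R : ℝ) < k + 1 := by push_cast; linarith
    exact_mod_cast this
  omega

/-- sign of a vertex: `+1` for row vertices, `-1` for column vertices. -/
private def sgn : ℕ ⊕ ℕ → ℝ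
  | Sum.inl _ => 1
  | Sum.inr _ => -1

private lemma exists_dependency (F : Finset (ℕ × ℕ)) (hFne : F.Nonempty)
    (hrow : ∀ p₀ ∈ F.image Prod.fst, 2 ≤ (F.filter fun e => e.1 = p₀).card)
    (hcol : ∀ q₀ ∈ F.image Prod.snd, 2 ≤ (F.filter fun e => e.2 = q₀).card) :
    ∃ d : ℕ × ℕ → ℝ, (∀ e, e ∉ F → d e = 0) ∧ (∃ e ∈ F, d e ≠ 0) ∧
      (∀ p₀, ∑ e ∈ F, (if e.1 = p₀ then d e else 0) = 0) ∧
      (∀ q₀, ∑ e ∈ F, (if e.2 = q₀ then d e else 0) = 0) := by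
  classical
  set R : Finset ℕ := F.image Prod.fst with hR
  set C : Finset ℕ := F.image Prod.snd with hC
  set V : Finset (ℕ ⊕ ℕ) := R.image Sum.inl ∪ C.image Sum.inr with hV
  -- counting: |F| ≥ |V|
  have hcard1 : 2 * R.card ≤ F.card := by
    have := Finset.card_eq_sum_card_fiberwise
      (f := Prod.fst) (s := F) (t := R) (fun e he => Finset.mem_image_of_mem _ he)
    rw [this]
    calc 2 * R.card = ∑ _p ∈ R, 2 := by rw [Finset.sum_const, smul_eq_mul, mul_comm]
    _ ≤ ∑ p ∈ R, (F.filter fun e => e.1 = p).card := Finset.sum_le_sum hrow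
  have hcard2 : 2 * C.card ≤ F.card := by
    have := Finset.card_eq_sum_card_fiberwise
      (f := Prod.snd) (s := F) (t := C) (fun e he => Finset.mem_image_of_mem _ he)
    rw [this]
    calc 2 * C.card = ∑ _q ∈ C, 2 := by rw [Finset.sum_const, smul_eq_mul, mul_comm]
    _ ≤ ∑ q ∈ C, (F.filter fun e => e.2 = q).card := Finset.sum_le_sum hcol
  have hVcard : V.card = R.card + C.card := by
    rw [hV, Finset.card_union_of_disjoint, Finset.card_image_of_injective _ Sum.inl_injective,
      Finset.card_image_of_injective _ Sum.inr_injective]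
    simp [Finset.disjoint_left]
  have hVF : V.card ≤ F.card := by omega
  -- membership of endpoints
  have hmemV1 : ∀ e ∈ F, Sum.inl e.1 ∈ V := fun e he =>
    Finset.mem_union_left _ (Finset.mem_image_of_mem _ (Finset.mem_image_of_mem _ he))
  have hmemV2 : ∀ e ∈ F, Sum.inr e.2 ∈ V := fun e he =>
    Finset.mem_union_right _ (Finset.mem_image_of_mem _ (Finset.mem_image_of_mem _ he))
  -- the incidence vectors
  set w : ↥F → (↥V → ℝ) := fun e v =>
    (if (v : ℕ ⊕ ℕ) = Sum.inl (e : ℕ × ℕ).1 then (1:ℝ) else 0) +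
    (if (v : ℕ ⊕ ℕ) = Sum.inr (e : ℕ × ℕ).2 then (1:ℝ) else 0) with hw
  -- linear functional
  set φ : (↥V → ℝ) →ₗ[ℝ] ℝ := ∑ v : ↥V, sgn (v : ℕ ⊕ ℕ) • LinearMap.proj v with hφ
  have hφ_apply : ∀ f : ↥V → ℝ, φ f = ∑ v : ↥V, sgn (v : ℕ ⊕ ℕ) * f v := by
    intro f; rw [hφ]; simp [LinearMap.sum_apply]
  have hφ_single : ∀ (v0 : ↥V), φ (Pi.single v0 1) = sgn (v0 : ℕ ⊕ ℕ) := by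
    intro v0
    rw [hφ_apply]
    rw [Finset.sum_eq_single v0]
    · simp
    · intro b _ hb; rw [Pi.single_apply, if_neg hb, mul_zero]
    · intro h; exact absurd (Finset.mem_univ v0) h
  have hφw : ∀ e : ↥F, φ (w e) = 0 := by
    intro e
    rw [hφ_apply, hw]
    have h1 : (⟨Sum.inl (e : ℕ × ℕ).1, hmemV1 _ e.2⟩ : ↥V) ≠
        (⟨Sum.inr (e : ℕ × ℕ).2, hmemV2 _ e.2⟩ : ↥V) := by
      intro h; simpa using Subtype.ext_iff.mp h
    calc ∑ v : ↥V, sgn (v : ℕ ⊕ ℕ) *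
          ((if (v : ℕ ⊕ ℕ) = Sum.inl (e : ℕ × ℕ).1 then (1:ℝ) else 0) +
           (if (v : ℕ ⊕ ℕ) = Sum.inr (e : ℕ × ℕ).2 then (1:ℝ) else 0))
        = ∑ v : ↥V, ((if v = (⟨Sum.inl (e : ℕ × ℕ).1, hmemV1 _ e.2⟩ : ↥V)
              then sgn (v : ℕ ⊕ ℕ) else 0) +
            (if v = (⟨Sum.inr (e : ℕ × ℕ).2, hmemV2 _ e.2⟩ : ↥V)
              then sgn (v : ℕ ⊕ ℕ) else 0)) := by
          apply Finset.sum_congr rfl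
          intro v _
          by_cases hv1 : (v : ℕ ⊕ ℕ) = Sum.inl (e : ℕ × ℕ).1 <;>
            by_cases hv2 : (v : ℕ ⊕ ℕ) = Sum.inr (e : ℕ × ℕ).2 <;>
            simp [hv1, hv2, Subtype.ext_iff] <;> ring
    _ = 0 := by
          rw [Finset.sum_add_distrib, Finset.sum_ite_eq' Finset.univ, Finset.sum_ite_eq' Finset.univ]
          simp [sgn]
  -- not linearly independent
  have hnli : ¬ LinearIndependent ℝ w := by
    intro hli
    have hne : Nonempty ↥F := ⟨⟨hFne.choose, hFne.choose_spec⟩⟩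
    have hcardle : Fintype.card ↥F ≤ Module.finrank ℝ (↥V → ℝ) :=
      hli.fintype_card_le_finrank
    rw [Module.finrank_fintype_fun_eq_card, Fintype.card_coe, Fintype.card_coe] at hcardle
    have hcardeq : Fintype.card ↥F = Module.finrank ℝ (↥V → ℝ) := by
      rw [Module.finrank_fintype_fun_eq_card, Fintype.card_coe, Fintype.card_coe]
      omega
    have hspan := hli.span_eq_top_of_card_eq_finrank hcardeq
    have hφ0 : φ = 0 := LinearMap.ext_on_range hspan (by intro i; rw [hφw]; rfl)
    obtain ⟨e0, he0⟩ := hFne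
    have := hφ_single ⟨Sum.inl e0.1, hmemV1 _ he0⟩
    rw [hφ0] at this
    simp [sgn] at this
  obtain ⟨g, hgsum, i0, hi0⟩ := Fintype.not_linearIndependent_iff.mp hnli
  refine ⟨fun e => if h : e ∈ F then g ⟨e, h⟩ else 0, ?_, ?_, ?_, ?_⟩
  · intro e he; simp [he]
  · exact ⟨i0, i0.2, by simpa [i0.2] using hi0⟩
  · intro p₀
    by_cases hp : Sum.inl p₀ ∈ V
    · have hv := congrFun hgsum ⟨Sum.inl p₀, hp⟩
      simp only [Finset.sum_apply, Pi.smul_apply, smul_eq_mul, Pi.zero_apply, hw] at hv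
      have hkey : (∑ e ∈ F, if e.1 = p₀ then (if h : e ∈ F then g ⟨e, h⟩ else (0:ℝ)) else 0) =
          ∑ i : ↥F, g i * ((if (Sum.inl p₀ : ℕ ⊕ ℕ) = Sum.inl (i : ℕ × ℕ).1 then (1:ℝ) else 0) +
            (if (Sum.inl p₀ : ℕ ⊕ ℕ) = Sum.inr (i : ℕ × ℕ).2 then (1:ℝ) else 0)) := by
        rw [← Finset.sum_coe_sort F
          (fun e => if e.1 = p₀ then (if h : e ∈ F then g ⟨e, h⟩ else (0:ℝ)) else 0)]
        apply Finset.sum_congr rfl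
        intro i _
        rw [dif_pos i.2]
        by_cases h : (i : ℕ × ℕ).1 = p₀
        · simp [h]
        · simp [h, if_neg (fun hh : p₀ = (i : ℕ × ℕ).1 => h hh.symm)]
      exact hkey.trans hv
    · apply Finset.sum_eq_zero
      intro e he
      have : e.1 ≠ p₀ := fun h => hp (h ▸ hmemV1 e he)
      rw [if_neg this]
  · intro q₀
    by_cases hq : Sum.inr q₀ ∈ V
    · have hv := congrFun hgsum ⟨Sum.inr q₀, hq⟩
      simp only [Finset.sum_apply, Pi.smul_apply, smul_eq_mul, Pi.zero_apply, hw] at hv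
      have hkey : (∑ e ∈ F, if e.2 = q₀ then (if h : e ∈ F then g ⟨e, h⟩ else (0:ℝ)) else 0) =
          ∑ i : ↥F, g i * ((if (Sum.inr q₀ : ℕ ⊕ ℕ) = Sum.inl (i : ℕ × ℕ).1 then (1:ℝ) else 0) +
            (if (Sum.inr q₀ : ℕ ⊕ ℕ) = Sum.inr (i : ℕ × ℕ).2 then (1:ℝ) else 0)) := by
        rw [← Finset.sum_coe_sort F
          (fun e => if e.2 = q₀ then (if h : e ∈ F then g ⟨e, h⟩ else (0:ℝ)) else 0)]
        apply Finset.sum_congr rfl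
        intro i _
        rw [dif_pos i.2]
        by_cases h : (i : ℕ × ℕ).2 = q₀
        · simp [h]
        · simp [h, if_neg (fun hh : q₀ = (i : ℕ × ℕ).2 => h hh.symm)]
      exact hkey.trans hv
    · apply Finset.sum_eq_zero
      intro e he
      have : e.2 ≠ q₀ := fun h => hq (h ▸ hmemV2 e he)
      rw [if_neg this]

/-- if the LP relaxation of the reconstruction problem with prescribed row and
column sums and positions `Z` forced to zero has a fractional solution with entries in `[0,1]`,
then it has a solution with entries in `{0,1}`. -/
theorem stmt14 (m n : ℕ) (hm : 0 < m) (hn : 0 < n)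
    (r c : ℕ → ℕ) (Z : Set (ℕ × ℕ)) (hZ : Z ⊆ ↑(gridIcc m n))
    (x : ℕ × ℕ → ℝ)
    (hx01 : ∀ p ∈ gridIcc m n, 0 ≤ x p ∧ x p ≤ 1)
    (hxZ : ∀ p ∈ Z, x p = 0)
    (hxrow : ∀ q ∈ Finset.Icc 1 n, ∑ p ∈ Finset.Icc 1 m, x (p, q) = (r q : ℝ))
    (hxcol : ∀ p ∈ Finset.Icc 1 m, ∑ q ∈ Finset.Icc 1 n, x (p, q) = (c p : ℝ)) :
    ∃ ξ : ℕ × ℕ → ℝ,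
      (∀ p ∈ gridIcc m n, ξ p = 0 ∨ ξ p = 1) ∧
      (∀ p ∈ Z, ξ p = 0) ∧
      (∀ q ∈ Finset.Icc 1 n, ∑ p ∈ Finset.Icc 1 m, ξ (p, q) = (r q : ℝ)) ∧
      (∀ p ∈ Finset.Icc 1 m, ∑ q ∈ Finset.Icc 1 n, ξ (p, q) = (c p : ℝ)) := by
  classical
  suffices H : ∀ k : ℕ, ∀ x : ℕ × ℕ → ℝ,
      (∀ p ∈ gridIcc m n, 0 ≤ x p ∧ x p ≤ 1) →
      (∀ p ∈ Z, x p = 0) →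
      (∀ q ∈ Finset.Icc 1 n, ∑ p ∈ Finset.Icc 1 m, x (p, q) = (r q : ℝ)) →
      (∀ p ∈ Finset.Icc 1 m, ∑ q ∈ Finset.Icc 1 n, x (p, q) = (c p : ℝ)) →
      ((gridIcc m n).filter fun p => x p ≠ 0 ∧ x p ≠ 1).card ≤ k →
      ∃ ξ : ℕ × ℕ → ℝ,
        (∀ p ∈ gridIcc m n, ξ p = 0 ∨ ξ p = 1) ∧
        (∀ p ∈ Z, ξ p = 0) ∧
        (∀ q ∈ Finset.Icc 1 n, ∑ p ∈ Finset.Icc 1 m, ξ (p, q) = (r q : ℝ)) ∧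
        (∀ p ∈ Finset.Icc 1 m, ∑ q ∈ Finset.Icc 1 n, ξ (p, q) = (c p : ℝ)) by
    exact H _ x hx01 hxZ hxrow hxcol le_rfl
  intro k
  induction k with
  | zero =>
    intro x hx01 hxZ hxrow hxcol hcard
    refine ⟨x, ?_, hxZ, hxrow, hxcol⟩
    intro p hp
    by_contra hcon
    push_neg at hcon
    have hmem : p ∈ (gridIcc m n).filter fun p => x p ≠ 0 ∧ x p ≠ 1 :=
      Finset.mem_filter.mpr ⟨hp, hcon⟩
    have := Finset.card_pos.mpr ⟨p, hmem⟩
    omega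
  | succ k ih =>
    intro x hx01 hxZ hxrow hxcol hcard
    by_cases hle : ((gridIcc m n).filter fun p => x p ≠ 0 ∧ x p ≠ 1).card ≤ k
    · exact ih x hx01 hxZ hxrow hxcol hle
    push_neg at hle
    set F := (gridIcc m n).filter fun p => x p ≠ 0 ∧ x p ≠ 1 with hF
    have hFG : F ⊆ gridIcc m n := Finset.filter_subset _ _
    have hFne : F.Nonempty := Finset.card_pos.mp (by omega)
    have hFbounds : ∀ e ∈ F, 0 < x e ∧ x e < 1 := by
      intro e he
      rw [hF, Finset.mem_filter] at he
      obtain ⟨hg, h0, h1⟩ := he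
      exact ⟨lt_of_le_of_ne (hx01 e hg).1 (Ne.symm h0), lt_of_le_of_ne (hx01 e hg).2 h1⟩
    -- every row/column meeting F meets it at least twice
    have hrowdeg : ∀ p₀ ∈ F.image Prod.fst, 2 ≤ (F.filter fun e => e.1 = p₀).card := by
      intro p₀ hp₀
      obtain ⟨e, heF, hep⟩ := Finset.mem_image.mp hp₀
      have hg' := hFG heF
      rw [gridIcc, Finset.mem_product] at hg'
      have hp₀m : p₀ ∈ Finset.Icc 1 m := hep ▸ hg'.1
      have h1 : 0 < (F.filter fun e => e.1 = p₀).card :=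
        Finset.card_pos.mpr ⟨e, Finset.mem_filter.mpr ⟨heF, hep⟩⟩
      have hinj : Function.Injective (fun q => (p₀, q) : ℕ → ℕ × ℕ) :=
        fun a b hab => by simpa using hab
      have himg : (F.filter fun e => e.1 = p₀) =
          ((Finset.Icc 1 n).filter fun q => x (p₀, q) ≠ 0 ∧ x (p₀, q) ≠ 1).image
            fun q => (p₀, q) := by
        ext e'
        constructor
        · intro h
          rw [Finset.mem_filter] at h
          obtain ⟨h1', h2'⟩ := h
          rw [hF, Finset.mem_filter] at h1'
          obtain ⟨hg2, hx2⟩ := h1'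
          rw [gridIcc, Finset.mem_product] at hg2
          have he'eq : e' = (p₀, e'.2) := by rw [← h2']
          refine Finset.mem_image.mpr ⟨e'.2, Finset.mem_filter.mpr ⟨hg2.2, ?_⟩, he'eq.symm⟩
          rw [← he'eq]; exact hx2
        · intro h
          obtain ⟨q, hq, hqe⟩ := Finset.mem_image.mp h
          rw [Finset.mem_filter] at hq
          rw [Finset.mem_filter]
          refine ⟨?_, by rw [← hqe]⟩
          rw [hF, Finset.mem_filter]
          refine ⟨?_, by rw [← hqe]; exact hq.2⟩
          rw [gridIcc, ← hqe, Finset.mem_product]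
          exact ⟨hp₀m, hq.1⟩
      have h2 : (F.filter fun e => e.1 = p₀).card ≠ 1 := by
        rw [himg, Finset.card_image_of_injective _ hinj]
        exact deg_ne_one _ _ (c p₀) (hxcol p₀ hp₀m)
          (fun q hq => hx01 (p₀, q)
            (by rw [gridIcc]; exact Finset.mem_product.mpr ⟨hp₀m, hq⟩))
      omega
    have hcoldeg : ∀ q₀ ∈ F.image Prod.snd, 2 ≤ (F.filter fun e => e.2 = q₀).card := by
      intro q₀ hq₀
      obtain ⟨e, heF, hep⟩ := Finset.mem_image.mp hq₀
      have hg' := hFG heF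
      rw [gridIcc, Finset.mem_product] at hg'
      have hq₀n : q₀ ∈ Finset.Icc 1 n := hep ▸ hg'.2
      have h1 : 0 < (F.filter fun e => e.2 = q₀).card :=
        Finset.card_pos.mpr ⟨e, Finset.mem_filter.mpr ⟨heF, hep⟩⟩
      have hinj : Function.Injective (fun p => (p, q₀) : ℕ → ℕ × ℕ) :=
        fun a b hab => by simpa using hab
      have himg : (F.filter fun e => e.2 = q₀) =
          ((Finset.Icc 1 m).filter fun p => x (p, q₀) ≠ 0 ∧ x (p, q₀) ≠ 1).image
            fun p => (p, q₀) := by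
        ext e'
        constructor
        · intro h
          rw [Finset.mem_filter] at h
          obtain ⟨h1', h2'⟩ := h
          rw [hF, Finset.mem_filter] at h1'
          obtain ⟨hg2, hx2⟩ := h1'
          rw [gridIcc, Finset.mem_product] at hg2
          have he'eq : e' = (e'.1, q₀) := by rw [← h2']
          refine Finset.mem_image.mpr ⟨e'.1, Finset.mem_filter.mpr ⟨hg2.1, ?_⟩, he'eq.symm⟩
          rw [← he'eq]; exact hx2
        · intro h
          obtain ⟨p, hp, hpe⟩ := Finset.mem_image.mp h
          rw [Finset.mem_filter] at hp
          rw [Finset.mem_filter]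
          refine ⟨?_, by rw [← hpe]⟩
          rw [hF, Finset.mem_filter]
          refine ⟨?_, by rw [← hpe]; exact hp.2⟩
          rw [gridIcc, ← hpe, Finset.mem_product]
          exact ⟨hp.1, hq₀n⟩
      have h2 : (F.filter fun e => e.2 = q₀).card ≠ 1 := by
        rw [himg, Finset.card_image_of_injective _ hinj]
        exact deg_ne_one _ _ (r q₀) (hxrow q₀ hq₀n)
          (fun p hp => hx01 (p, q₀)
            (by rw [gridIcc]; exact Finset.mem_product.mpr ⟨hp, hq₀n⟩))
      omega
    obtain ⟨d, hd0, ⟨e1, he1F, he1ne⟩, hdrow, hdcol⟩ :=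
      exists_dependency F hFne hrowdeg hcoldeg
    -- translate the dependency into vanishing row/column sums over the grid
    have hdP : ∀ p₀ ∈ Finset.Icc 1 m, ∑ q ∈ Finset.Icc 1 n, d (p₀, q) = 0 := by
      intro p₀ hp₀
      have h1 : ∑ e ∈ gridIcc m n, (if e.1 = p₀ then d e else 0) =
          ∑ e ∈ F, (if e.1 = p₀ then d e else 0) := by
        refine (Finset.sum_subset hFG ?_).symm
        intro e _ heF
        rw [hd0 e heF]; exact ite_self 0
      have h2 : ∑ e ∈ gridIcc m n, (if e.1 = p₀ then d e else 0) =
          ∑ q ∈ Finset.Icc 1 n, d (p₀, q) := by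
        rw [gridIcc, Finset.sum_product]
        have hcong : ∀ p ∈ Finset.Icc 1 m,
            (∑ q ∈ Finset.Icc 1 n, if (p, q).1 = p₀ then d (p, q) else 0)
            = if p = p₀ then ∑ q ∈ Finset.Icc 1 n, d (p, q) else 0 := by
          intro p _
          split_ifs with h
          · rfl
          · exact Finset.sum_eq_zero fun q _ => rfl
        rw [Finset.sum_congr rfl hcong, Finset.sum_ite_eq' (Finset.Icc 1 m) p₀, if_pos hp₀]
      rw [← h2, h1, hdrow p₀]
    have hdQ : ∀ q₀ ∈ Finset.Icc 1 n, ∑ p ∈ Finset.Icc 1 m, d (p, q₀) = 0 := by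
      intro q₀ hq₀
      have h1 : ∑ e ∈ gridIcc m n, (if e.2 = q₀ then d e else 0) =
          ∑ e ∈ F, (if e.2 = q₀ then d e else 0) := by
        refine (Finset.sum_subset hFG ?_).symm
        intro e _ heF
        rw [hd0 e heF]; exact ite_self 0
      have h2 : ∑ e ∈ gridIcc m n, (if e.2 = q₀ then d e else 0) =
          ∑ p ∈ Finset.Icc 1 m, d (p, q₀) := by
        rw [gridIcc, Finset.sum_product]
        have hcong : ∀ p ∈ Finset.Icc 1 m,
            (∑ q ∈ Finset.Icc 1 n, if (p, q).2 = q₀ then d (p, q) else 0)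
            = d (p, q₀) := by
          intro p _
          rw [Finset.sum_ite_eq' (Finset.Icc 1 n) q₀ (fun q => d (p, q)), if_pos hq₀]
        rw [Finset.sum_congr rfl hcong]
      rw [← h2, h1, hdcol q₀]
    -- choose the step size
    set bnd : ℕ × ℕ → ℝ := fun e => if 0 < d e then (1 - x e) / d e else x e / (-d e) with hbnd
    set S := F.filter fun e => d e ≠ 0 with hS
    have hSne : S.Nonempty := ⟨e1, Finset.mem_filter.mpr ⟨he1F, he1ne⟩⟩
    obtain ⟨e0, he0S, he0min⟩ := S.exists_min_image bnd hSne
    have he0F : e0 ∈ F := (Finset.mem_filter.mp he0S).1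
    have hde0 : d e0 ≠ 0 := (Finset.mem_filter.mp he0S).2
    have hx0 := hFbounds e0 he0F
    set t := bnd e0 with ht
    have htpos : 0 < t := by
      rw [ht, hbnd]
      simp only []
      split_ifs with h
      · exact div_pos (by linarith [hx0.2]) h
      · have hneg : d e0 < 0 := lt_of_le_of_ne (not_lt.mp h) hde0
        exact div_pos hx0.1 (by linarith)
    have hbnd_le : ∀ e ∈ S, t ≤ bnd e := he0min
    -- the perturbed matrix
    set x' : ℕ × ℕ → ℝ := fun e => x e + t * d e with hx'
    have hx'eq : ∀ e, e ∉ F → x' e = x e := by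
      intro e he
      simp only [hx', hd0 e he, mul_zero, add_zero]
    have hkey : ∀ e ∈ F, 0 ≤ x' e ∧ x' e ≤ 1 := by
      intro e he
      have hxe := hFbounds e he
      simp only [hx']
      rcases lt_trichotomy (d e) 0 with hlt | heq | hgt
      · have heS : e ∈ S := Finset.mem_filter.mpr ⟨he, ne_of_lt hlt⟩
        have hle' : t ≤ bnd e := hbnd_le e heS
        have hbe : bnd e = x e / (-d e) := by
          rw [hbnd]; simp only []; rw [if_neg (by linarith)]
        have hdne : d e ≠ 0 := ne_of_lt hlt
        have hmul : bnd e * d e = -x e := by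
          rw [hbe, div_mul_eq_mul_div, div_neg, mul_div_cancel_right₀ _ hdne]
        have h1 : bnd e * d e ≤ t * d e := mul_le_mul_of_nonpos_right hle' (le_of_lt hlt)
        have h2 : t * d e < 0 := mul_neg_of_pos_of_neg htpos hlt
        constructor <;> [linarith; linarith]
      · simp only [heq, mul_zero, add_zero]
        exact ⟨le_of_lt hxe.1, le_of_lt hxe.2⟩
      · have heS : e ∈ S := Finset.mem_filter.mpr ⟨he, ne_of_gt hgt⟩
        have hle' : t ≤ bnd e := hbnd_le e heS
        have hbe : bnd e = (1 - x e) / d e := by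
          rw [hbnd]; simp only []; rw [if_pos hgt]
        have hmul : bnd e * d e = 1 - x e := by
          rw [hbe]; field_simp
        have h1 : t * d e ≤ bnd e * d e := mul_le_mul_of_nonneg_right hle' (le_of_lt hgt)
        have h2 : 0 < t * d e := mul_pos htpos hgt
        constructor <;> [linarith; linarith]
    have he0hit : x' e0 = 0 ∨ x' e0 = 1 := by
      simp only [hx', ht, hbnd]
      by_cases h : 0 < d e0
      · right; rw [if_pos h, div_mul_cancel₀ _ hde0]; ring
      · left; rw [if_neg h, div_mul_eq_mul_div, div_neg, mul_div_cancel_right₀ _ hde0]; ring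
    refine ih x' ?_ ?_ ?_ ?_ ?_
    · intro p hp
      by_cases hpF : p ∈ F
      · exact hkey p hpF
      · rw [hx'eq p hpF]; exact hx01 p hp
    · intro p hp
      have hpF : p ∉ F := by
        intro h
        rw [hF, Finset.mem_filter] at h
        exact h.2.1 (hxZ p hp)
      rw [hx'eq p hpF]; exact hxZ p hp
    · intro q hq
      simp only [hx']
      rw [Finset.sum_add_distrib, ← Finset.mul_sum, hdQ q hq, hxrow q hq, mul_zero, add_zero]
    · intro p hp
      simp only [hx']
      rw [Finset.sum_add_distrib, ← Finset.mul_sum, hdP p hp, hxcol p hp, mul_zero, add_zero]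
    · have hsub : ((gridIcc m n).filter fun p => x' p ≠ 0 ∧ x' p ≠ 1) ⊆ F.erase e0 := by
        intro p hp
        rw [Finset.mem_filter] at hp
        obtain ⟨hpg, hp0, hp1⟩ := hp
        have hpF : p ∈ F := by
          by_contra hpF
          rw [hx'eq p hpF] at hp0 hp1
          exact hpF (by rw [hF, Finset.mem_filter]; exact ⟨hpg, hp0, hp1⟩)
        refine Finset.mem_erase.mpr ⟨?_, hpF⟩
        intro hpe0
        rcases he0hit with h | h
        · exact hp0 (by rw [hpe0]; exact h)
        · exact hp1 (by rw [hpe0]; exact h)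
      have hcle := Finset.card_le_card hsub
      have hce : (F.erase e0).card = F.card - 1 := Finset.card_erase_of_mem he0F
      omega
end

section
/- Let m, n ∈ 2ℕ, let I ⊆ C(m,n,2), and let r_{j+l} ∈ ℕ₀ (j ∈ Π_y(I), l ∈ {0,1}) and c_{i+l} ∈ ℕ₀ (i ∈ Π_x(I), l ∈ {0,1}) satisfy the consistency conditions r_j + r_{j+1} = ρ_j(m) and c_i + c_{i+1} = σ_i(n) for every (i,j) ∈ I. For (i,j) ∈ I define a_{i,j} := i + min{l ∈ {0,1} : σ_i(j) ≤ Σ_{h=0}^{l} c_{i+h}} and b_{i,j} := j + min{l ∈ {0,1} : ρ_j(i) ≤ Σ_{h=0}^{l} r_{j+h}}, and define ξ*_{p,q} for (p,q) ∈ G(I) by ξ*_{p,q} := 1 if (p,q) = (a_{i,j}, b_{i,j}) for the block B_2(i,j) containing (p,q), and ξ*_{p,q} := 0 otherwise. Then ξ* is a solution of the DR(1) instance: Σ_{p:(p,j)∈G(I)} ξ*_{p,j+l} = r_{j+l} for all j ∈ Π_y(I), l ∈ {0,1}; Σ_{q:(i,q)∈G(I)} ξ*_{i+l,q} = c_{i+l}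 for all i ∈ Π_x(I), l ∈ {0,1}; and Σ_{(p,q)∈B_2(i,j)} ξ*_{p,q} = 1 for all (i,j) ∈ I. -/
open scoped Classical

/-- `G(I) = ⋃_{(i,j) ∈ I} B_2(i,j)`. -/
def GofI (k : ℕ) (I : Finset (ℕ × ℕ)) : Finset (ℕ × ℕ) :=
  I.biUnion fun p => blockF k p.1 p.2

/-- `Π_x(I)`, the projection of `I` onto the first coordinate. -/
def PiX (I : Finset (ℕ × ℕ)) : Finset ℕ := I.image Prod.fst

/-- `Π_y(I)`, the projection of `I` onto the second coordinate. -/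
def PiY (I : Finset (ℕ × ℕ)) : Finset ℕ := I.image Prod.snd

/-- `σ_i(j) = |({i} × [j]) ∩ I|`. -/
def sigmaI (I : Finset (ℕ × ℕ)) (i j : ℕ) : ℕ :=
  (I.filter fun z => z.1 = i ∧ z.2 ∈ Finset.Icc 1 j).card

/-- `ρ_j(i) = |([i] × {j}) ∩ I|`. -/
def rhoI (I : Finset (ℕ × ℕ)) (j i : ℕ) : ℕ :=
  (I.filter fun z => z.1 ∈ Finset.Icc 1 i ∧ z.2 = j).card

/-- `a_{i,j} = i + min{l ∈ {0,1} : σ_i(j) ≤ Σ_{h=0}^{l} c_{i+h}}`. -/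
def aCorner (I : Finset (ℕ × ℕ)) (c : ℕ → ℕ) (i j : ℕ) : ℕ :=
  if sigmaI I i j ≤ c i then i else i + 1

/-- `b_{i,j} = j + min{l ∈ {0,1} : ρ_j(i) ≤ Σ_{h=0}^{l} r_{j+h}}`. -/
def bCorner (I : Finset (ℕ × ℕ)) (r : ℕ → ℕ) (i j : ℕ) : ℕ :=
  if rhoI I j i ≤ r j then j else j + 1

/-- The (odd) corner coordinate of the `2 × 2` block containing coordinate `p`. -/
def cnr (p : ℕ) : ℕ := if p % 2 = 1 then p else p - 1

/-- The canonical solution `ξ*`: `ξ*_{p,q} = 1` iff `(p,q) = (a_{i,j}, b_{i,j})` for the block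
`B_2(i,j)` containing `(p,q)`. -/
def xiStar (I : Finset (ℕ × ℕ)) (r c : ℕ → ℕ) (z : ℕ × ℕ) : ℕ :=
  if z.1 = aCorner I c (cnr z.1) (cnr z.2) ∧ z.2 = bCorner I r (cnr z.1) (cnr z.2) then 1 else 0


section Aux

open Finset

/-- Counting lemma: the number of elements `i` of `S` whose rank
`|{s ∈ S : s ≤ i}|` is at most `t` equals `min t |S|`. -/
lemma count_le (S : Finset ℕ) (t : ℕ) :
    (S.filter fun i => (S.filter (fun s => s ≤ i)).card ≤ t).card = min t S.card := by
  set f : ℕ → ℕ := fun i => (S.filter (fun s => s ≤ i)).card with hf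
  have hsm : ∀ i ∈ S, ∀ i' ∈ S, i < i' → f i < f i' := by
    intro i hi i' hi' hlt
    apply Finset.card_lt_card
    have hsub : S.filter (fun s => s ≤ i) ⊆ S.filter (fun s => s ≤ i') := by
      intro s hs
      simp only [Finset.mem_filter] at hs ⊢
      exact ⟨hs.1, hs.2.trans hlt.le⟩
    refine (Finset.ssubset_iff_of_subset hsub).mpr ⟨i', ?_, ?_⟩
    · simp [hi']
    · simp only [Finset.mem_filter]
      push_neg
      intro _
      omega
  have hinj : Set.InjOn f ↑S := by
    intro a ha b hb hab
    by_contra hne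
    rcases Nat.lt_or_ge a b with h | h
    · exact absurd hab (Nat.ne_of_lt (hsm a ha b hb h))
    · have hba : b < a := by omega
      exact absurd hab.symm (Nat.ne_of_lt (hsm b hb a ha hba))
  have hcard_img : (S.image f).card = S.card := Finset.card_image_of_injOn hinj
  have hsub : S.image f ⊆ Finset.Icc 1 S.card := by
    intro v hv
    simp only [Finset.mem_image] at hv
    obtain ⟨i, hi, rfl⟩ := hv
    simp only [Finset.mem_Icc]
    constructor
    · exact Finset.card_pos.mpr ⟨i, by simp [hi]⟩
    · exact Finset.card_le_card (Finset.filter_subset _ _)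
  have himg : S.image f = Finset.Icc 1 S.card := by
    apply Finset.eq_of_subset_of_card_le hsub
    rw [hcard_img, Nat.card_Icc]
    omega
  have key : (S.filter fun i => f i ≤ t).image f = (S.image f).filter (fun v => v ≤ t) :=
    (Finset.filter_image (s := S) (f := f) (p := fun v => v ≤ t)).symm
  calc (S.filter fun i => f i ≤ t).card
      = ((S.filter fun i => f i ≤ t).image f).card :=
        (Finset.card_image_of_injOn (hinj.mono (Finset.coe_subset.mpr (Finset.filter_subset _ _)))).symm
    _ = ((Finset.Icc 1 S.card).filter (fun v => v ≤ t)).card := by rw [key, himg]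
    _ = min t S.card := by
        have h2 : (Finset.Icc 1 S.card).filter (fun v => v ≤ t) = Finset.Icc 1 (min t S.card) := by
          ext v
          simp only [Finset.mem_filter, Finset.mem_Icc]
          omega
        rw [h2, Nat.card_Icc]
        omega

lemma card_filter_comp {α β : Type*} [DecidableEq β] (s : Finset α) (g : α → β)
    (hg : Set.InjOn g ↑s) (p : β → Prop) [DecidablePred p] :
    (s.filter fun x => p (g x)).card = ((s.image g).filter p).card := by
  rw [Finset.filter_image]
  exact (Finset.card_image_of_injOn
    (hg.mono (Finset.coe_subset.mpr (Finset.filter_subset _ _)))).symm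

/-- Master lemma for row sums. -/
lemma rowMain (m : ℕ) (I : Finset (ℕ × ℕ))
    (hodd : ∀ w ∈ I, w.1 % 2 = 1 ∧ w.2 % 2 = 1 ∧ 1 ≤ w.1 ∧ w.1 ≤ m)
    (r c : ℕ → ℕ)
    (hcons : ∀ w ∈ I, r w.2 + r (w.2 + 1) = rhoI I w.2 m) :
    ∀ j ∈ PiY I, ∀ l < 2,
      ∑ z ∈ (GofI 2 I).filter (fun z => z.2 = j), xiStar I r c (z.1, j + l) = r (j + l) := by
  intro j hj l hl
  obtain ⟨w0, hw0, hw0j⟩ := Finset.mem_image.mp hj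
  have hjodd : j % 2 = 1 := hw0j ▸ (hodd w0 hw0).2.1
  set Row := I.filter (fun w => w.2 = j) with hRow
  have hinjfst : Set.InjOn (Prod.fst : ℕ × ℕ → ℕ) (Row : Set (ℕ × ℕ)) := by
    intro a ha b hb h
    simp only [hRow, Finset.coe_filter, Set.mem_setOf_eq] at ha hb
    exact Prod.ext h (ha.2.trans hb.2.symm)
  set S := Row.image Prod.fst with hS
  have hrho : ∀ i, rhoI I j i = (S.filter (fun s => s ≤ i)).card := by
    intro i
    unfold rhoI
    have h1 : (I.filter fun z => z.1 ∈ Finset.Icc 1 i ∧ z.2 = j)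
        = Row.filter (fun z => z.1 ≤ i) := by
      rw [hRow, Finset.filter_filter]
      apply Finset.filter_congr
      intro z hz
      have h1z := (hodd z hz).2.2.1
      simp only [Finset.mem_Icc]
      omega
    rw [h1]
    exact card_filter_comp Row Prod.fst hinjfst (fun s => s ≤ i)
  have hScard : rhoI I j m = S.card := by
    rw [hrho m]
    congr 1
    apply Finset.filter_true_of_mem
    intro s hs
    simp only [hS, hRow, Finset.mem_image, Finset.mem_filter] at hs
    obtain ⟨z, ⟨hzI, _⟩, rfl⟩ := hs
    exact (hodd z hzI).2.2.2
  have hrj : r j + r (j + 1) = S.card := by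
    have h := hcons w0 hw0
    rw [hw0j] at h
    rw [h, hScard]
  have hset : (GofI 2 I).filter (fun z => z.2 = j)
      = Row.biUnion (fun w => {(w.1, j), (w.1 + 1, j)}) := by
    ext z
    simp only [Finset.mem_filter, GofI, Finset.mem_biUnion, blockF, Finset.mem_product,
      Finset.mem_Icc, hRow, Finset.mem_insert, Finset.mem_singleton]
    constructor
    · rintro ⟨⟨w, hw, ⟨hz1a, hz1b⟩, hz2a, hz2b⟩, hzj⟩
      have hwodd := hodd w hw
      have hw2 : w.2 = j := by omega
      refine ⟨w, ⟨hw, hw2⟩, ?_⟩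
      have h1 : z.1 = w.1 ∨ z.1 = w.1 + 1 := by omega
      rcases h1 with h | h
      · exact Or.inl (Prod.ext h hzj)
      · exact Or.inr (Prod.ext h hzj)
    · rintro ⟨w, ⟨hw, hw2⟩, h | h⟩ <;> subst h <;>
        exact ⟨⟨w, hw, by constructor <;> constructor <;> omega⟩, rfl⟩
  have hdisj : Set.PairwiseDisjoint (Row : Set (ℕ × ℕ))
      (fun w : ℕ × ℕ => ({(w.1, j), (w.1 + 1, j)} : Finset (ℕ × ℕ))) := by
    intro a ha b hb hne
    simp only [Finset.mem_coe, hRow, Finset.mem_filter] at ha hb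
    have hao := (hodd a ha.1).1
    have hbo := (hodd b hb.1).1
    have hne1 : a.1 ≠ b.1 := fun h => hne (Prod.ext h (ha.2.trans hb.2.symm))
    refine Finset.disjoint_left.mpr ?_
    intro z hz hz'
    simp only [Finset.mem_insert, Finset.mem_singleton] at hz hz'
    have h1 : z.1 = a.1 ∨ z.1 = a.1 + 1 := by rcases hz with rfl | rfl <;> simp
    have h2 : z.1 = b.1 ∨ z.1 = b.1 + 1 := by rcases hz' with rfl | rfl <;> simp
    omega
  rw [hset, Finset.sum_biUnion hdisj]
  have hpair : ∀ w ∈ Row,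
      ∑ z ∈ ({(w.1, j), (w.1 + 1, j)} : Finset (ℕ × ℕ)), xiStar I r c (z.1, j + l)
      = if j + l = bCorner I r w.1 j then 1 else 0 := by
    intro w hw
    have hwI : w ∈ I := (Finset.mem_filter.mp hw).1
    have hw1odd : w.1 % 2 = 1 := (hodd w hwI).1
    rw [Finset.sum_pair (by simp)]
    have c1 : cnr w.1 = w.1 := by simp [cnr, hw1odd]
    have c2 : cnr (w.1 + 1) = w.1 := by
      have h : (w.1 + 1) % 2 ≠ 1 := by omega
      simp [cnr, h]
    have c3 : cnr (j + l) = j := by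
      have hl2 : l = 0 ∨ l = 1 := by omega
      rcases hl2 with rfl | rfl
      · simpa [cnr] using hjodd ▸ (by simp [cnr, hjodd])
      · have h : (j + 1) % 2 ≠ 1 := by omega
        simp [cnr, h]
    simp only [xiStar, c1, c2, c3]
    have ha : aCorner I c w.1 j = w.1 ∨ aCorner I c w.1 j = w.1 + 1 := by
      unfold aCorner; split <;> simp
    rcases ha with h | h <;> rw [h] <;>
      simp [show w.1 + 1 ≠ w.1 by omega, show w.1 ≠ w.1 + 1 by omega]
  rw [Finset.sum_congr rfl hpair, ← Finset.sum_filter, Finset.sum_const, smul_eq_mul, mul_one]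
  have hbit : ∀ w : ℕ × ℕ, (j = bCorner I r w.1 j ↔ rhoI I j w.1 ≤ r j)
      ∧ (j + 1 = bCorner I r w.1 j ↔ ¬ rhoI I j w.1 ≤ r j) := by
    intro w
    unfold bCorner
    split <;> rename_i h <;> constructor <;> simp [h] <;> omega
  have hcount : (Row.filter (fun w => rhoI I j w.1 ≤ r j)).card = r j := by
    rw [card_filter_comp Row Prod.fst hinjfst (fun i => rhoI I j i ≤ r j), ← hS]
    have heq : S.filter (fun i => rhoI I j i ≤ r j)
        = S.filter (fun i => (S.filter (fun s => s ≤ i)).card ≤ r j) :=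
      Finset.filter_congr fun i _ => by rw [hrho i]
    rw [heq, count_le]
    omega
  have hl2 : l = 0 ∨ l = 1 := by omega
  rcases hl2 with rfl | rfl
  · have heq : Row.filter (fun w => j + 0 = bCorner I r w.1 j)
        = Row.filter (fun w => rhoI I j w.1 ≤ r j) :=
      Finset.filter_congr fun w _ => by simpa using (hbit w).1
    rw [heq, hcount]
    rfl
  · have heq : Row.filter (fun w => j + 1 = bCorner I r w.1 j)
        = Row.filter (fun w => ¬ rhoI I j w.1 ≤ r j) :=
      Finset.filter_congr fun w _ => (hbit w).2
    rw [heq]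
    have htot := Finset.card_filter_add_card_filter_not
      (s := Row) (p := fun w => rhoI I j w.1 ≤ r j)
    have hRowcard : Row.card = S.card :=
      (Finset.card_image_of_injOn hinjfst).symm
    omega

lemma rho_swap (I : Finset (ℕ × ℕ)) (j i : ℕ) :
    rhoI (I.image Prod.swap) j i = sigmaI I j i := by
  unfold rhoI sigmaI
  rw [Finset.filter_image, Finset.card_image_of_injective _ Prod.swap_injective]
  congr 1
  apply Finset.filter_congr
  intro z _
  simp only [Function.comp, Prod.fst_swap, Prod.snd_swap]
  exact and_comm

lemma sigma_swap (I : Finset (ℕ × ℕ)) (i j : ℕ) :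
    sigmaI (I.image Prod.swap) i j = rhoI I i j := by
  have h := rho_swap (I.image Prod.swap) i j
  rw [Finset.image_image,
    show Prod.swap ∘ (Prod.swap : ℕ × ℕ → ℕ × ℕ) = id from funext Prod.swap_swap,
    Finset.image_id] at h
  exact h.symm

lemma a_swap (I : Finset (ℕ × ℕ)) (r : ℕ → ℕ) (i j : ℕ) :
    aCorner (I.image Prod.swap) r i j = bCorner I r j i := by
  unfold aCorner bCorner
  rw [sigma_swap]

lemma b_swap (I : Finset (ℕ × ℕ)) (c : ℕ → ℕ) (i j : ℕ) :
    bCorner (I.image Prod.swap) c i j = aCorner I c j i := by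
  unfold aCorner bCorner
  rw [rho_swap]

lemma xiStar_swap (I : Finset (ℕ × ℕ)) (r c : ℕ → ℕ) (z : ℕ × ℕ) :
    xiStar (I.image Prod.swap) c r z.swap = xiStar I r c z := by
  simp only [xiStar, Prod.fst_swap, Prod.snd_swap, a_swap, b_swap]
  rw [if_congr and_comm rfl rfl]

lemma GofI_swap (I : Finset (ℕ × ℕ)) :
    GofI 2 (I.image Prod.swap) = (GofI 2 I).image Prod.swap := by
  ext z
  rw [Finset.mem_image]
  simp only [GofI, Finset.mem_biUnion, Finset.mem_image, blockF, Finset.mem_product,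
    Finset.mem_Icc]
  constructor
  · rintro ⟨w, ⟨v, hv, rfl⟩, hb⟩
    exact ⟨z.swap, ⟨v, hv, by simpa using ⟨hb.2, hb.1⟩⟩, Prod.swap_swap z⟩
  · rintro ⟨y, ⟨v, hv, hb⟩, rfl⟩
    exact ⟨v.swap, ⟨v, hv, rfl⟩, by simpa using ⟨hb.2, hb.1⟩⟩

lemma PiY_swap (I : Finset (ℕ × ℕ)) : PiY (I.image Prod.swap) = PiX I := by
  unfold PiX PiY
  rw [Finset.image_image]
  rfl

end Aux

/-- under the consistency conditions `r_j + r_{j+1} = ρ_j(m)` and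
`c_i + c_{i+1} = σ_i(n)` for all `(i,j) ∈ I`, the explicitly defined `ξ*` solves the `DR(1)`
instance (row sums, column sums, and one `1` per block). -/
theorem stmt15 (m n : ℕ) (hm : 2 ∣ m) (hm0 : 0 < m) (hn : 2 ∣ n) (hn0 : 0 < n)
    (I : Finset (ℕ × ℕ)) (hI : I ⊆ cornerPts m n 2) (r c : ℕ → ℕ)
    (hcons : ∀ w ∈ I, r w.2 + r (w.2 + 1) = rhoI I w.2 m ∧
      c w.1 + c (w.1 + 1) = sigmaI I w.1 n) :
    (∀ j ∈ PiY I, ∀ l < 2,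
      ∑ z ∈ (GofI 2 I).filter (fun z => z.2 = j), xiStar I r c (z.1, j + l) = r (j + l)) ∧
    (∀ i ∈ PiX I, ∀ l < 2,
      ∑ z ∈ (GofI 2 I).filter (fun z => z.1 = i), xiStar I r c (i + l, z.2) = c (i + l)) ∧
    (∀ w ∈ I, ∑ z ∈ blockF 2 w.1 w.2, xiStar I r c z = 1) := by
  
  classical
  have hodd : ∀ w ∈ I, w.1 % 2 = 1 ∧ w.2 % 2 = 1 ∧ 1 ≤ w.1 ∧ w.1 ≤ m ∧ 1 ≤ w.2 ∧ w.2 ≤ n := by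
    intro w hw
    have h := hI hw
    simp only [cornerPts, gridIcc, Finset.mem_filter, Finset.mem_product, Finset.mem_Icc] at h
    omega
  refine ⟨?_, ?_, ?_⟩
  · exact rowMain m I (fun w hw => ⟨(hodd w hw).1, (hodd w hw).2.1, (hodd w hw).2.2.1,
      (hodd w hw).2.2.2.1⟩) r c (fun w hw => (hcons w hw).1)
  · intro i hi l hl
    set J := I.image Prod.swap with hJ
    have hJodd : ∀ w ∈ J, w.1 % 2 = 1 ∧ w.2 % 2 = 1 ∧ 1 ≤ w.1 ∧ w.1 ≤ n := by
      intro w hw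
      obtain ⟨v, hv, rfl⟩ := Finset.mem_image.mp hw
      have h := hodd v hv
      simp only [Prod.fst_swap, Prod.snd_swap]
      exact ⟨h.2.1, h.1, h.2.2.2.2.1, h.2.2.2.2.2⟩
    have hJcons : ∀ w ∈ J, c w.2 + c (w.2 + 1) = rhoI J w.2 n := by
      intro w hw
      obtain ⟨v, hv, rfl⟩ := Finset.mem_image.mp hw
      rw [hJ, rho_swap]
      simpa using (hcons v hv).2
    have hiJ : i ∈ PiY J := by rw [hJ, PiY_swap]; exact hi
    have hmain := rowMain n J hJodd c r hJcons i hiJ l hl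
    have hGset : (GofI 2 J).filter (fun z => z.2 = i)
        = ((GofI 2 I).filter (fun z => z.1 = i)).image Prod.swap := by
      rw [hJ, GofI_swap, Finset.filter_image]
      simp only [Prod.snd_swap]
    rw [hGset, Finset.sum_image (fun x _ y _ h => Prod.swap_injective h)] at hmain
    rw [← hmain]
    apply Finset.sum_congr rfl
    intro z _
    have := xiStar_swap I r c (i + l, z.2)
    simpa using this.symm
  · intro w hw
    have h1 := (hodd w hw).1
    have h2 := (hodd w hw).2.1
    have hB : blockF 2 w.1 w.2
        = {(w.1, w.2), (w.1, w.2 + 1), (w.1 + 1, w.2), (w.1 + 1, w.2 + 1)} := by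
      ext z
      simp only [blockF, Finset.mem_product, Finset.mem_Icc, Finset.mem_insert,
        Finset.mem_singleton, Prod.ext_iff]
      omega
    rw [hB,
      Finset.sum_insert (by simp [Prod.ext_iff] <;> omega),
      Finset.sum_insert (by simp [Prod.ext_iff] <;> omega),
      Finset.sum_insert (by simp [Prod.ext_iff] <;> omega),
      Finset.sum_singleton]
    have c1 : cnr w.1 = w.1 := by simp [cnr, h1]
    have c2 : cnr (w.1 + 1) = w.1 := by
      have h : (w.1 + 1) % 2 ≠ 1 := by omega
      simp [cnr, h]
    have c3 : cnr w.2 = w.2 := by simp [cnr, h2]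
    have c4 : cnr (w.2 + 1) = w.2 := by
      have h : (w.2 + 1) % 2 ≠ 1 := by omega
      simp [cnr, h]
    simp only [xiStar, c1, c2, c3, c4]
    have ha : aCorner I c w.1 w.2 = w.1 ∨ aCorner I c w.1 w.2 = w.1 + 1 := by
      unfold aCorner; split <;> simp
    have hb : bCorner I r w.1 w.2 = w.2 ∨ bCorner I r w.1 w.2 = w.2 + 1 := by
      unfold bCorner; split <;> simp
    rcases ha with h | h <;> rcases hb with h' | h' <;> rw [h, h'] <;>
      simp [show w.1 + 1 ≠ w.1 by omega, show w.1 ≠ w.1 + 1 by omega,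
        show w.2 + 1 ≠ w.2 by omega, show w.2 ≠ w.2 + 1 by omega]
end
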